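/- On the locally thin 2-category Cat_sep 𝒯 of L-separated 𝒯-categories and 𝒯-functors, the presheaf construction X ↦ X̂ together with the Yoneda functors y_X as unit and μ_X = y_X^{-1} as multiplication defines a 2-monad 𝕀 = ((·)̂, y, μ) which is of Kock–Zöberlein type (i.e. ŷ_X ≤ y_{X̂} for all X); moreover its Eilenberg–Moore category is equivalent to Cocompl_sep 𝒯, the category of L-separated cocomplete 𝒯-categories and left adjoint 𝒯-functors. In particular, Cocompl_sep 𝒯 is complete. -/

import Mathlib

universe u

namespace Paper

/-- A strict topological theory `𝒯 = (𝕋, V, ξ)`: a commutative unital quantale `V`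
(a complete lattice with a commutative monoid structure whose multiplication preserves
suprema in each variable, with `⊥ < k`), a `Set`-monad `𝕋 = (T, e, m)` such that `T`
sends pullbacks to weak pullbacks and the naturality squares of `m` are weak pullbacks,
and a `𝕋`-algebra structure `ξ : T V → V` for which `⊗` and `k` are `𝕋`-algebra
homomorphisms and `ξ_X := ξ ∘ T(-)` is a (monotone) natural transformation
`P_V → P_V T`. -/
structure TopTheory (V : Type u) [CompleteLattice V] (T : Type u → Type u) where
  tens : V → V → V
  unit : V
  tens_comm : ∀ u v : V, tens u v = tens v u
  tens_assoc : ∀ u v w : V, tens (tens u v) w = tens u (tens v w)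
  unit_tens : ∀ v : V, tens unit v = v
  tens_sSup : ∀ (u : V) (S : Set V), tens u (sSup S) = ⨆ v ∈ S, tens u v
  bot_lt_unit : (⊥ : V) < unit
  map : ∀ {X Y : Type u}, (X → Y) → T X → T Y
  map_id : ∀ {X : Type u}, map (id : X → X) = id
  map_comp : ∀ {X Y Z : Type u} (g : Y → Z) (f : X → Y) (𝔵 : T X),
    map (g ∘ f) 𝔵 = map g (map f 𝔵)
  e : ∀ {X : Type u}, X → T X
  m : ∀ {X : Type u}, T (T X) → T X
  e_nat : ∀ {X Y : Type u} (f : X → Y) (x : X), map f (e x) = e (f x)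
  m_nat : ∀ {X Y : Type u} (f : X → Y) (𝔛 : T (T X)), map f (m 𝔛) = m (map (map f) 𝔛)
  m_e : ∀ {X : Type u} (𝔵 : T X), m (e 𝔵) = 𝔵
  m_map_e : ∀ {X : Type u} (𝔵 : T X), m (map e 𝔵) = 𝔵
  m_assoc : ∀ {X : Type u} (𝔜 : T (T (T X))), m (m 𝔜) = m (map m 𝔜)
  /-- (BC): `T` sends pullbacks to weak pullbacks. -/
  map_bc : ∀ {X Y Z : Type u} (f : X → Z) (g : Y → Z) (𝔵 : T X) (𝔶 : T Y),
    map f 𝔵 = map g 𝔶 →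
    ∃ 𝔴 : T {p : X × Y // f p.1 = g p.2},
      map (fun p => p.1.1) 𝔴 = 𝔵 ∧ map (fun p => p.1.2) 𝔴 = 𝔶
  /-- (BC): every naturality square of `m` is a weak pullback. -/
  m_bc : ∀ {X Y : Type u} (f : X → Y) (𝔜 : T (T Y)) (𝔵 : T X),
    m 𝔜 = map f 𝔵 → ∃ 𝔛 : T (T X), map (map f) 𝔛 = 𝔜 ∧ m 𝔛 = 𝔵
  xi : T V → V
  xi_e : ∀ v : V, xi (e v) = v
  xi_m : ∀ 𝔙 : T (T V), xi (m 𝔙) = xi (map xi 𝔙)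
  /-- `k : 1 → V` is a `𝕋`-algebra homomorphism. -/
  xi_unit : ∀ {X : Type u} (𝔵 : T X), xi (map (fun _ => unit) 𝔵) = unit
  /-- `⊗ : V × V → V` is a `𝕋`-algebra homomorphism. -/
  xi_tens : ∀ 𝔴 : T (V × V),
    xi (map (fun p => tens p.1 p.2) 𝔴) = tens (xi (map Prod.fst 𝔴)) (xi (map Prod.snd 𝔴))
  /-- each component `ξ_X : V^X → V^{T X}` is monotone. -/
  xi_mono : ∀ {X : Type u} (φ φ' : X → V), (∀ x, φ x ≤ φ' x) →
    ∀ 𝔵 : T X, xi (map φ 𝔵) ≤ xi (map φ' 𝔵)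
  /-- `ξ_X` is a natural transformation `P_V → P_V T`. -/
  xi_nat : ∀ {X Y : Type u} (f : X → Y) (φ : X → V) (𝔶 : T Y),
    (⨆ 𝔵 : {𝔵 : T X // map f 𝔵 = 𝔶}, xi (map φ 𝔵.1)) =
      xi (map (fun y => ⨆ x : {x : X // f x = y}, φ x.1) 𝔶)

namespace TopTheory

variable {V : Type u} [CompleteLattice V] {T : Type u → Type u}

/-- The internal hom of the quantale: `u ⊗ (-) ⊣ hom (u, -)`. -/
def ihom (𝒯 : TopTheory V T) (u w : V) : V := sSup {z | 𝒯.tens u z ≤ w}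

/-- The extension `T_ξ` of `T : Set → Set` to `V`-relations. -/
def Txi (𝒯 : TopTheory V T) {X Y : Type u} (r : X → Y → V) (𝔵 : T X) (𝔶 : T Y) : V :=
  ⨆ 𝔴 : {w : T (X × Y) // 𝒯.map Prod.fst w = 𝔵 ∧ 𝒯.map Prod.snd w = 𝔶},
    𝒯.xi (𝒯.map (fun p => r p.1 p.2) 𝔴.1)

/-- Kleisli convolution `β ∘ α = β · T_ξ α · m_X°` of `𝒯`-relations
`α : X ⇸ Y` and `β : Y ⇸ Z`. -/
def kleisli (𝒯 : TopTheory V T) {X Y Z : Type u}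
    (β : T Y → Z → V) (α : T X → Y → V) (𝔵 : T X) (z : Z) : V :=
  ⨆ 𝔛 : {𝔛 : T (T X) // 𝒯.m 𝔛 = 𝔵}, ⨆ 𝔶 : T Y, 𝒯.tens (𝒯.Txi α 𝔛.1 𝔶) (β 𝔶 z)

/-- The `𝒯`-relation `e_X° : X ⇸ X`. -/
def unitRel (𝒯 : TopTheory V T) (X : Type u) (𝔵 : T X) (x : X) : V :=
  ⨆ _ : 𝔵 = 𝒯.e x, 𝒯.unit

/-- A `𝒯`-category structure on `X`: a `𝒯`-relation `a : X ⇸ X` with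
`e_X° ≤ a` and `a ∘ a ≤ a`. -/
structure TCatStr (𝒯 : TopTheory V T) (X : Type u) where
  rel : T X → X → V
  le_refl : ∀ x : X, 𝒯.unit ≤ rel (𝒯.e x) x
  comp : ∀ (𝔵 : T X) (x : X), 𝒯.kleisli rel rel 𝔵 x ≤ rel 𝔵 x

/-- The `𝒯`-module conditions `φ ∘ a ≤ φ` and `b ∘ φ ≤ φ` for a `𝒯`-relation
`φ : X ⇸ Y` between (structures underlying) `𝒯`-categories `(X,a)` and `(Y,b)`. -/
def IsTModRel (𝒯 : TopTheory V T) {X Y : Type u}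
    (a : T X → X → V) (b : T Y → Y → V) (φ : T X → Y → V) : Prop :=
  (∀ 𝔵 y, 𝒯.kleisli φ a 𝔵 y ≤ φ 𝔵 y) ∧ (∀ 𝔵 y, 𝒯.kleisli b φ 𝔵 y ≤ φ 𝔵 y)

variable {𝒯 : TopTheory V T}

/-- `f_* = b · T f`. -/
def modStar {X Y : Type u} (b : 𝒯.TCatStr Y) (f : X → Y) (𝔵 : T X) (y : Y) : V :=
  b.rel (𝒯.map f 𝔵) y

/-- `f^* = f° · b`. -/
def modCostar {X Y : Type u} (b : 𝒯.TCatStr Y) (f : X → Y) (𝔶 : T Y) (x : X) : V :=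
  b.rel 𝔶 (f x)

/-- The extension `φ ⟜ ψ` of `φ : X ⇸∘ Y` along `ψ : X ⇸∘ Z`, given by
`(φ ⟜ ψ)(𝔷,y) = ⋀_{𝔵 ∈ T X} hom((T_ξ ψ · m_X°)(𝔵,𝔷), φ(𝔵,y))`. -/
def extend (𝒯 : TopTheory V T) {X Y Z : Type u}
    (φ : T X → Y → V) (ψ : T X → Z → V) (𝔷 : T Z) (y : Y) : V :=
  ⨅ 𝔵 : T X, 𝒯.ihom (⨆ 𝔛 : {𝔛 : T (T X) // 𝒯.m 𝔛 = 𝔵}, 𝒯.Txi ψ 𝔛.1 𝔷) (φ 𝔵 y)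

/-- A `𝒯`-functor `f : (X,a) → (Y,b)`. -/
def IsTFunctor {X Y : Type u} (a : 𝒯.TCatStr X) (b : 𝒯.TCatStr Y) (f : X → Y) : Prop :=
  ∀ (𝔵 : T X) (x : X), a.rel 𝔵 x ≤ b.rel (𝒯.map f 𝔵) (f x)

/-- A fully faithful `𝒯`-functor. -/
def FullyFaithful {X Y : Type u} (a : 𝒯.TCatStr X) (b : 𝒯.TCatStr Y) (f : X → Y) : Prop :=
  ∀ (𝔵 : T X) (x : X), a.rel 𝔵 x = b.rel (𝒯.map f 𝔵) (f x)

/-- The order `f ≤ g ⟺ f^* ≤ g^*` on `𝒯`-functors `X → (Y,b)`. -/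
def funLE {X Y : Type u} (b : 𝒯.TCatStr Y) (f g : X → Y) : Prop :=
  ∀ (𝔶 : T Y) (x : X), b.rel 𝔶 (f x) ≤ b.rel 𝔶 (g x)

/-- Equivalence `f ≅ g ⟺ f^* = g^*` of `𝒯`-functors `X → (Y,b)`. -/
def FunEquiv {X Y : Type u} (b : 𝒯.TCatStr Y) (f g : X → Y) : Prop :=
  ∀ (𝔶 : T Y) (x : X), b.rel 𝔶 (f x) = b.rel 𝔶 (g x)

/-- `f ⊣ g`:  `1_X ≤ g·f` and `f·g ≤ 1_Y`. -/
def IsAdjunction {X Y : Type u} (a : 𝒯.TCatStr X) (b : 𝒯.TCatStr Y)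
    (f : X → Y) (g : Y → X) : Prop :=
  (∀ (𝔵 : T X) (x : X), a.rel 𝔵 x ≤ a.rel 𝔵 (g (f x))) ∧
    (∀ (𝔶 : T Y) (y : Y), b.rel 𝔶 (f (g y)) ≤ b.rel 𝔶 y)

/-- A left adjoint `𝒯`-functor. -/
def IsLeftAdjoint {X Y : Type u} (a : 𝒯.TCatStr X) (b : 𝒯.TCatStr Y) (f : X → Y) : Prop :=
  IsTFunctor a b f ∧ ∃ g : Y → X, IsTFunctor b a g ∧ IsAdjunction a b f g

/-- L-separatedness: equivalent `𝒯`-functors into `X` are equal. -/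
def Separated {X : Type u} (a : 𝒯.TCatStr X) : Prop :=
  ∀ (A : Type u) (as : 𝒯.TCatStr A) (f g : A → X),
    IsTFunctor as a f → IsTFunctor as a g → FunEquiv a f g → f = g

/-- Injectivity with respect to fully faithful `𝒯`-functors. -/
def Injective {X : Type u} (a : 𝒯.TCatStr X) : Prop :=
  ∀ (A B : Type u) (as : 𝒯.TCatStr A) (bs : 𝒯.TCatStr B) (f : A → X) (i : A → B),
    IsTFunctor as a f → IsTFunctor as bs i → FullyFaithful as bs i →
      ∃ g : B → X, IsTFunctor bs a g ∧ FunEquiv a (g ∘ i) f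

/-- `g : Z → X` is the `ψ`-weighted colimit of `h : A → X`, i.e. `g_* = h_* ⟜ ψ`. -/
def IsColimit {X A Z : Type u} (a : 𝒯.TCatStr X) (h : A → X) (ψ : T A → Z → V)
    (g : Z → X) : Prop :=
  ∀ (𝔷 : T Z) (x : X), modStar a g 𝔷 x = 𝒯.extend (modStar a h) ψ 𝔷 x

/-- Cocompleteness: every weighted diagram has a colimit. -/
def Cocomplete {X : Type u} (a : 𝒯.TCatStr X) : Prop :=
  ∀ (A Z : Type u) (as : 𝒯.TCatStr A) (cs : 𝒯.TCatStr Z) (h : A → X),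
    IsTFunctor as a h → ∀ ψ : T A → Z → V, 𝒯.IsTModRel as.rel cs.rel ψ →
      ∃ g : Z → X, IsTFunctor cs a g ∧ IsColimit a h ψ g

/-- Cocontinuity: preservation of all weighted colimits. -/
def Cocontinuous {X Y : Type u} (a : 𝒯.TCatStr X) (b : 𝒯.TCatStr Y) (f : X → Y) : Prop :=
  ∀ (A Z : Type u) (as : 𝒯.TCatStr A) (cs : 𝒯.TCatStr Z) (h : A → X)
    (ψ : T A → Z → V) (g : Z → X),
    IsTFunctor as a h → 𝒯.IsTModRel as.rel cs.rel ψ → IsTFunctor cs a g →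
      IsColimit a h ψ g → IsColimit b (f ∘ h) ψ (f ∘ g)

/-- A presheaf on `(X,a)`: a `𝒯`-module `X ⇸∘ G`, where `G = (1, e_1°)`. -/
def IsPresheaf {X : Type u} (a : 𝒯.TCatStr X) (ψ : T X → V) : Prop :=
  𝒯.IsTModRel a.rel (𝒯.unitRel PUnit) (fun 𝔵 _ => ψ 𝔵)

/-- The underlying set of the presheaf `𝒯`-category `X̂`. -/
def Hat {X : Type u} (a : 𝒯.TCatStr X) : Type u := {ψ : T X → V // IsPresheaf a ψ}

/-- The `𝒯`-category structure `⟦-,-⟧` of `V^{|X|}`. -/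
def powRel (𝒯 : TopTheory V T) (X : Type u) (𝔭 : T (T X → V)) (ψ : T X → V) : V :=
  ⨅ 𝔮 : {q : T ((T X) × (T X → V)) // 𝒯.map Prod.snd q = 𝔭},
    𝒯.ihom (𝒯.xi (𝒯.map (fun p => p.2 p.1) 𝔮.1)) (ψ (𝒯.m (𝒯.map Prod.fst 𝔮.1)))

/-- `hs` is the `𝒯`-category structure on `X̂` inherited from `V^{|X|}`. -/
def IsHatStr {X : Type u} (a : 𝒯.TCatStr X) (hs : 𝒯.TCatStr (Hat a)) : Prop :=
  ∀ (𝔭 : T (Hat a)) (ψ : Hat a), hs.rel 𝔭 ψ = 𝒯.powRel X (𝒯.map Subtype.val 𝔭) ψ.1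

/-- `y` is the Yoneda functor `X → X̂`, `y x = a(-,x)`. -/
def IsYoneda {X : Type u} (a : 𝒯.TCatStr X) (y : X → Hat a) : Prop :=
  ∀ (x : X) (𝔵 : T X), (y x).1 𝔵 = a.rel 𝔵 x

/-- The underlying map `ψ ↦ ψ ∘ f^*` of `f̂ : X̂ → Ŷ`. -/
def hatMapRel {X Y : Type u} (b : 𝒯.TCatStr Y) (f : X → Y) (ψ : T X → V) (𝔶 : T Y) : V :=
  𝒯.kleisli (fun 𝔵 (_ : PUnit.{u + 1}) => ψ 𝔵) (modCostar b f) 𝔶 PUnit.unit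

/-- `fh` is the `𝒯`-functor `f̂ : X̂ → Ŷ`, with underlying map `ψ ↦ ψ ∘ f^*`. -/
def IsHatMap {X Y : Type u} (a : 𝒯.TCatStr X) (b : 𝒯.TCatStr Y) (f : X → Y)
    (fh : Hat a → Hat b) : Prop :=
  ∀ (ψ : Hat a) (𝔶 : T Y), (fh ψ).1 𝔶 = hatMapRel b f ψ.1 𝔶

/-- An inhabited `𝒯`-module: `k ≤ ⋀_y ⋁_𝔵 φ(𝔵,y)`. -/
def InhabitedMod (𝒯 : TopTheory V T) {X Y : Type u} (φ : T X → Y → V) : Prop :=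
  𝒯.unit ≤ ⨅ y : Y, ⨆ 𝔵 : T X, φ 𝔵 y

/-- A dense `𝒯`-functor: `f_*` is inhabited. -/
def Dense {X Y : Type u} (b : 𝒯.TCatStr Y) (f : X → Y) : Prop :=
  𝒯.InhabitedMod (modStar b f)

/-- The underlying set of `X⁺ = {ψ ∈ X̂ ∣ ψ inhabited}`. -/
def Plus {X : Type u} (a : 𝒯.TCatStr X) : Type u :=
  {ψ : Hat a // 𝒯.InhabitedMod (fun 𝔵 (_ : PUnit.{u + 1}) => ψ.1 𝔵)}

/-- `ps` is the `𝒯`-category structure on `X⁺` inherited from `X̂`. -/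
def IsPlusStr {X : Type u} (a : 𝒯.TCatStr X) (hs : 𝒯.TCatStr (Hat a))
    (ps : 𝒯.TCatStr (Plus a)) : Prop :=
  ∀ (𝔭 : T (Plus a)) (ψ : Plus a), ps.rel 𝔭 ψ = hs.rel (𝒯.map Subtype.val 𝔭) ψ.1

/-- Inhabited-cocompleteness: all colimits with inhabited weights exist. -/
def ICocomplete {X : Type u} (a : 𝒯.TCatStr X) : Prop :=
  ∀ (A Z : Type u) (as : 𝒯.TCatStr A) (cs : 𝒯.TCatStr Z) (h : A → X),
    IsTFunctor as a h → ∀ ψ : T A → Z → V, 𝒯.IsTModRel as.rel cs.rel ψ →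
      𝒯.InhabitedMod ψ → ∃ g : Z → X, IsTFunctor cs a g ∧ IsColimit a h ψ g

/-- Inhabited-cocontinuity: preservation of all colimits with inhabited weights. -/
def ICocontinuous {X Y : Type u} (a : 𝒯.TCatStr X) (b : 𝒯.TCatStr Y) (f : X → Y) : Prop :=
  ∀ (A Z : Type u) (as : 𝒯.TCatStr A) (cs : 𝒯.TCatStr Z) (h : A → X)
    (ψ : T A → Z → V) (g : Z → X),
    IsTFunctor as a h → 𝒯.IsTModRel as.rel cs.rel ψ → 𝒯.InhabitedMod ψ →
      IsTFunctor cs a g → IsColimit a h ψ g → IsColimit b (f ∘ h) ψ (f ∘ g)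


/-! Auxiliary lemmas and the categories `Cocompl_sep 𝒯` and `Cat_sep V`. -/

section Lemmas

variable (𝒯 : TopTheory V T)

lemma tens_mono {u u' v v' : V} (h1 : u ≤ u') (h2 : v ≤ v') :
    𝒯.tens u v ≤ 𝒯.tens u' v' := by
  have mono2 : ∀ (w : V) {x y : V}, x ≤ y → 𝒯.tens w x ≤ 𝒯.tens w y := by
    intro w x y hxy
    have hxy' : sSup ({x, y} : Set V) = y := by
      rw [sSup_pair, sup_eq_right.mpr hxy]
    have := 𝒯.tens_sSup w ({x, y} : Set V)
    rw [hxy'] at this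
    rw [this]
    exact le_biSup _ (by simp)
  calc 𝒯.tens u v ≤ 𝒯.tens u v' := mono2 _ h2
    _ = 𝒯.tens v' u := 𝒯.tens_comm _ _
    _ ≤ 𝒯.tens v' u' := mono2 _ h1
    _ = 𝒯.tens u' v' := 𝒯.tens_comm _ _

lemma le_Txi_e {A B : Type u} (rr : A → B → V) (x : A) (y : B) :
    rr x y ≤ 𝒯.Txi rr (𝒯.e x) (𝒯.e y) := by
  have h1 : 𝒯.map (Prod.fst : A × B → A) (𝒯.e (x, y)) = 𝒯.e x := 𝒯.e_nat _ _
  have h2 : 𝒯.map (Prod.snd : A × B → B) (𝒯.e (x, y)) = 𝒯.e y := 𝒯.e_nat _ _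
  have h3 : 𝒯.xi (𝒯.map (fun p : A × B => rr p.1 p.2) (𝒯.e (x, y))) = rr x y := by
    rw [𝒯.e_nat, 𝒯.xi_e]
  calc rr x y = _ := h3.symm
    _ ≤ 𝒯.Txi rr (𝒯.e x) (𝒯.e y) :=
      le_iSup_of_le (⟨𝒯.e (x, y), h1, h2⟩ :
        {w : T (A × B) // 𝒯.map Prod.fst w = 𝒯.e x ∧ 𝒯.map Prod.snd w = 𝒯.e y}) le_rfl

variable {𝒯}

lemma whisker {X : Type u} (a : 𝒯.TCatStr X) {x x' : X}
    (h : 𝒯.unit ≤ a.rel (𝒯.e x) x') (𝔵 : T X) :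
    a.rel 𝔵 x ≤ a.rel 𝔵 x' := by
  have key : 𝒯.tens (𝒯.Txi a.rel (𝒯.e 𝔵) (𝒯.e x)) (a.rel (𝒯.e x) x')
      ≤ 𝒯.kleisli a.rel a.rel 𝔵 x' := by
    refine le_iSup_of_le (⟨𝒯.e 𝔵, 𝒯.m_e 𝔵⟩ : {𝔛 : T (T X) // 𝒯.m 𝔛 = 𝔵}) ?_
    exact le_iSup_of_le (𝒯.e x) le_rfl
  calc a.rel 𝔵 x = 𝒯.tens 𝒯.unit (a.rel 𝔵 x) := (𝒯.unit_tens _).symm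
    _ = 𝒯.tens (a.rel 𝔵 x) 𝒯.unit := 𝒯.tens_comm _ _
    _ ≤ 𝒯.tens (𝒯.Txi a.rel (𝒯.e 𝔵) (𝒯.e x)) (a.rel (𝒯.e x) x') :=
        𝒯.tens_mono (𝒯.le_Txi_e a.rel 𝔵 x) h
    _ ≤ 𝒯.kleisli a.rel a.rel 𝔵 x' := key
    _ ≤ a.rel 𝔵 x' := a.comp 𝔵 x'

lemma isTFunctor_id {X : Type u} (a : 𝒯.TCatStr X) : IsTFunctor a a id := by
  intro 𝔵 x
  rw [show 𝒯.map (id : X → X) 𝔵 = 𝔵 from congrFun 𝒯.map_id 𝔵]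
  exact le_rfl

lemma IsTFunctor.comp {X Y Z : Type u} {a : 𝒯.TCatStr X} {b : 𝒯.TCatStr Y}
    {c : 𝒯.TCatStr Z} {f : X → Y} {f' : Y → Z}
    (hf : IsTFunctor a b f) (hf' : IsTFunctor b c f') : IsTFunctor a c (f' ∘ f) := by
  intro 𝔵 x
  calc a.rel 𝔵 x ≤ b.rel (𝒯.map f 𝔵) (f x) := hf 𝔵 x
    _ ≤ c.rel (𝒯.map f' (𝒯.map f 𝔵)) (f' (f x)) := hf' _ _
    _ = c.rel (𝒯.map (f' ∘ f) 𝔵) ((f' ∘ f) x) := by rw [𝒯.map_comp]; rfl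

lemma isLeftAdjoint_id {X : Type u} (a : 𝒯.TCatStr X) : IsLeftAdjoint a a id :=
  ⟨isTFunctor_id a, id, isTFunctor_id a, fun _ _ => le_rfl, fun _ _ => le_rfl⟩

lemma IsLeftAdjoint.comp {X Y Z : Type u} {a : 𝒯.TCatStr X} {b : 𝒯.TCatStr Y}
    {c : 𝒯.TCatStr Z} {f : X → Y} {f' : Y → Z}
    (h1 : IsLeftAdjoint a b f) (h2 : IsLeftAdjoint b c f') :
    IsLeftAdjoint a c (f' ∘ f) := by
  obtain ⟨hf, g, hg, unit1, counit1⟩ := h1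
  obtain ⟨hf', g', hg', unit2, counit2⟩ := h2
  refine ⟨hf.comp hf', g ∘ g', hg'.comp hg, ?_, ?_⟩
  · intro 𝔵 x
    have step1 : a.rel 𝔵 x ≤ a.rel 𝔵 (g (f x)) := unit1 𝔵 x
    have hk : 𝒯.unit ≤ a.rel (𝒯.e (g (f x))) (g (g' (f' (f x)))) := by
      have hb1 : 𝒯.unit ≤ b.rel (𝒯.e (f x)) (g' (f' (f x))) :=
        le_trans (b.le_refl (f x)) (unit2 _ _)
      have hb2 : b.rel (𝒯.e (f x)) (g' (f' (f x)))
          ≤ a.rel (𝒯.e (g (f x))) (g (g' (f' (f x)))) := by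
        have := hg (𝒯.e (f x)) (g' (f' (f x)))
        rwa [𝒯.e_nat] at this
      exact le_trans hb1 hb2
    exact le_trans step1 (whisker a hk 𝔵)
  · intro 𝔷 z
    show c.rel 𝔷 (f' (f (g (g' z)))) ≤ c.rel 𝔷 z
    have hk : 𝒯.unit ≤ c.rel (𝒯.e (f' (f (g (g' z))))) (f' (g' z)) := by
      have hb1 : 𝒯.unit ≤ b.rel (𝒯.e (f (g (g' z)))) (g' z) :=
        le_trans (b.le_refl _) (counit1 (𝒯.e (f (g (g' z)))) (g' z))
      have hb2 : b.rel (𝒯.e (f (g (g' z)))) (g' z)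
          ≤ c.rel (𝒯.e (f' (f (g (g' z))))) (f' (g' z)) := by
        have := hf' (𝒯.e (f (g (g' z)))) (g' z)
        rwa [𝒯.e_nat] at this
      exact le_trans hb1 hb2
    exact le_trans (whisker c hk 𝔷) (counit2 𝔷 z)

lemma Txi_comp_le (𝒯 : TopTheory V T) {A B A' B' : Type u}
    (rr : A' → B' → V) (uu : A → A') (vv : B → B') (𝔞 : T A) (𝔟 : T B) :
    𝒯.Txi (fun p q => rr (uu p) (vv q)) 𝔞 𝔟 ≤ 𝒯.Txi rr (𝒯.map uu 𝔞) (𝒯.map vv 𝔟) := by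
  apply iSup_le
  rintro ⟨𝔴, hw1, hw2⟩
  have hfst : 𝒯.map Prod.fst (𝒯.map (fun p : A × B => (uu p.1, vv p.2)) 𝔴)
      = 𝒯.map uu 𝔞 := by
    calc 𝒯.map Prod.fst (𝒯.map (fun p : A × B => (uu p.1, vv p.2)) 𝔴)
        = 𝒯.map (fun p : A × B => uu p.1) 𝔴 := (𝒯.map_comp _ _ 𝔴).symm
      _ = 𝒯.map uu (𝒯.map Prod.fst 𝔴) := 𝒯.map_comp _ _ 𝔴
      _ = 𝒯.map uu 𝔞 := by rw [hw1]
  have hsnd : 𝒯.map Prod.snd (𝒯.map (fun p : A × B => (uu p.1, vv p.2)) 𝔴)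
      = 𝒯.map vv 𝔟 := by
    calc 𝒯.map Prod.snd (𝒯.map (fun p : A × B => (uu p.1, vv p.2)) 𝔴)
        = 𝒯.map (fun p : A × B => vv p.2) 𝔴 := (𝒯.map_comp _ _ 𝔴).symm
      _ = 𝒯.map vv (𝒯.map Prod.snd 𝔴) := 𝒯.map_comp _ _ 𝔴
      _ = 𝒯.map vv 𝔟 := by rw [hw2]
  refine le_iSup_of_le
    (⟨𝒯.map (fun p : A × B => (uu p.1, vv p.2)) 𝔴, hfst, hsnd⟩ :
      {w : T (A' × B') // 𝒯.map Prod.fst w = 𝒯.map uu 𝔞 ∧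
        𝒯.map Prod.snd w = 𝒯.map vv 𝔟}) (le_of_eq ?_)
  show 𝒯.xi (𝒯.map (fun p : A × B => rr (uu p.1) (vv p.2)) 𝔴)
      = 𝒯.xi (𝒯.map (fun q : A' × B' => rr q.1 q.2)
          (𝒯.map (fun p : A × B => (uu p.1, vv p.2)) 𝔴))
  rw [← 𝒯.map_comp]
  rfl

/-- The `𝒯`-category structure obtained by restricting `b` along `f`. -/
def pullbackStr {X Y : Type u} (b : 𝒯.TCatStr Y) (f : X → Y) : 𝒯.TCatStr X where
  rel 𝔵 x := b.rel (𝒯.map f 𝔵) (f x)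
  le_refl x := by
    show 𝒯.unit ≤ b.rel (𝒯.map f (𝒯.e x)) (f x)
    rw [𝒯.e_nat]; exact b.le_refl (f x)
  comp 𝔵 x := by
    apply iSup_le
    rintro ⟨𝔛, h𝔛⟩
    apply iSup_le
    intro 𝔶
    have key := Txi_comp_le 𝒯 b.rel (𝒯.map f) f 𝔛 𝔶
    have hm : 𝒯.m (𝒯.map (𝒯.map f) 𝔛) = 𝒯.map f 𝔵 := by
      rw [← 𝒯.m_nat, h𝔛]
    have step : 𝒯.tens (𝒯.Txi (fun 𝔵' x' => b.rel (𝒯.map f 𝔵') (f x')) 𝔛 𝔶)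
        (b.rel (𝒯.map f 𝔶) (f x)) ≤ 𝒯.kleisli b.rel b.rel (𝒯.map f 𝔵) (f x) := by
      refine le_trans (𝒯.tens_mono key le_rfl) ?_
      exact le_iSup_of_le (⟨𝒯.map (𝒯.map f) 𝔛, hm⟩ :
        {𝔜 : T (T Y) // 𝒯.m 𝔜 = 𝒯.map f 𝔵}) (le_iSup_of_le (𝒯.map f 𝔶) le_rfl)
    exact le_trans step (b.comp _ _)

lemma star_transport {A X : Type u} {a : 𝒯.TCatStr X} {f g : A → X}
    (hgf : ∀ v, 𝒯.unit ≤ a.rel (𝒯.e (g v)) (f v)) (𝔵 : T A) (y : X) :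
    a.rel (𝒯.map f 𝔵) y ≤ a.rel (𝒯.map g 𝔵) y := by
  have hp1 : 𝒯.map Prod.fst (𝒯.map (fun v : A => (𝒯.e (g v), f v)) 𝔵)
      = 𝒯.map 𝒯.e (𝒯.map g 𝔵) := by
    calc 𝒯.map Prod.fst (𝒯.map (fun v : A => (𝒯.e (g v), f v)) 𝔵)
        = 𝒯.map (fun v : A => 𝒯.e (g v)) 𝔵 := (𝒯.map_comp _ _ 𝔵).symm
      _ = 𝒯.map 𝒯.e (𝒯.map g 𝔵) := 𝒯.map_comp _ _ 𝔵
  have hp2 : 𝒯.map Prod.snd (𝒯.map (fun v : A => (𝒯.e (g v), f v)) 𝔵)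
      = 𝒯.map f 𝔵 := (𝒯.map_comp _ _ 𝔵).symm
  have hm : 𝒯.m (𝒯.map Prod.fst (𝒯.map (fun v : A => (𝒯.e (g v), f v)) 𝔵))
      = 𝒯.map g 𝔵 := by rw [hp1, 𝒯.m_map_e]
  have hval : 𝒯.unit ≤ 𝒯.xi (𝒯.map (fun p : T X × X => a.rel p.1 p.2)
      (𝒯.map (fun v : A => (𝒯.e (g v), f v)) 𝔵)) := by
    have h1 : 𝒯.map (fun p : T X × X => a.rel p.1 p.2)
        (𝒯.map (fun v : A => (𝒯.e (g v), f v)) 𝔵)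
        = 𝒯.map (fun v : A => a.rel (𝒯.e (g v)) (f v)) 𝔵 := by
      rw [← 𝒯.map_comp]; rfl
    have h2 : 𝒯.xi (𝒯.map (fun _ : A => 𝒯.unit) 𝔵)
        ≤ 𝒯.xi (𝒯.map (fun v : A => a.rel (𝒯.e (g v)) (f v)) 𝔵) :=
      𝒯.xi_mono _ _ hgf 𝔵
    rw [h1, ← 𝒯.xi_unit 𝔵]
    exact h2
  have hTxi : 𝒯.unit ≤ 𝒯.Txi a.rel
      (𝒯.map Prod.fst (𝒯.map (fun v : A => (𝒯.e (g v), f v)) 𝔵)) (𝒯.map f 𝔵) :=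
    le_trans hval (le_iSup_of_le
      (⟨𝒯.map (fun v : A => (𝒯.e (g v), f v)) 𝔵, rfl, hp2⟩ :
        {w : T (T X × X) //
          𝒯.map Prod.fst w = 𝒯.map Prod.fst (𝒯.map (fun v : A => (𝒯.e (g v), f v)) 𝔵) ∧
          𝒯.map Prod.snd w = 𝒯.map f 𝔵}) le_rfl)
  calc a.rel (𝒯.map f 𝔵) y
      = 𝒯.tens 𝒯.unit (a.rel (𝒯.map f 𝔵) y) := (𝒯.unit_tens _).symm
    _ ≤ 𝒯.tens (𝒯.Txi a.rel
        (𝒯.map Prod.fst (𝒯.map (fun v : A => (𝒯.e (g v), f v)) 𝔵)) (𝒯.map f 𝔵))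
        (a.rel (𝒯.map f 𝔵) y) := 𝒯.tens_mono hTxi le_rfl
    _ ≤ 𝒯.kleisli a.rel a.rel (𝒯.map g 𝔵) y :=
        le_iSup_of_le
          (⟨𝒯.map Prod.fst (𝒯.map (fun v : A => (𝒯.e (g v), f v)) 𝔵), hm⟩ :
            {𝔛 : T (T X) // 𝒯.m 𝔛 = 𝒯.map g 𝔵})
          (le_iSup_of_le (𝒯.map f 𝔵) le_rfl)
    _ ≤ a.rel (𝒯.map g 𝔵) y := a.comp _ _

end Lemmas

/-! ### `V`-categories -/

/-- A `V`-category structure. -/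
structure VCatStr (𝒯 : TopTheory V T) (X : Type u) where
  rel : X → X → V
  le_refl : ∀ x : X, 𝒯.unit ≤ rel x x
  comp : ∀ x y z : X, 𝒯.tens (rel x y) (rel y z) ≤ rel x z

variable {𝒯 : TopTheory V T}

/-- A `V`-functor. -/
def IsVFunctor {X Y : Type u} (rr : 𝒯.VCatStr X) (ss : 𝒯.VCatStr Y) (f : X → Y) : Prop :=
  ∀ x y : X, rr.rel x y ≤ ss.rel (f x) (f y)

/-- L-separatedness for `V`-categories: equivalent `V`-functors into `X` are equal. -/
def VSep {X : Type u} (rr : 𝒯.VCatStr X) : Prop :=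
  ∀ (A : Type u) (ra : 𝒯.VCatStr A) (f g : A → X), IsVFunctor ra rr f → IsVFunctor ra rr g →
    (∀ x, 𝒯.unit ≤ rr.rel (f x) (g x)) → (∀ x, 𝒯.unit ≤ rr.rel (g x) (f x)) → f = g

/-- The underlying `V`-category `(X, a·e_X)` of a `𝒯`-category `(X,a)`. -/
def underV {X : Type u} (a : 𝒯.TCatStr X) : 𝒯.VCatStr X where
  rel x y := a.rel (𝒯.e x) y
  le_refl := a.le_refl
  comp x y z := by
    have h1 : a.rel (𝒯.e x) y ≤ 𝒯.Txi a.rel (𝒯.e (𝒯.e x)) (𝒯.e y) :=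
      𝒯.le_Txi_e a.rel (𝒯.e x) y
    have h2 : 𝒯.tens (𝒯.Txi a.rel (𝒯.e (𝒯.e x)) (𝒯.e y)) (a.rel (𝒯.e y) z)
        ≤ 𝒯.kleisli a.rel a.rel (𝒯.e x) z := by
      refine le_iSup_of_le (⟨𝒯.e (𝒯.e x), 𝒯.m_e _⟩ :
        {𝔛 : T (T X) // 𝒯.m 𝔛 = 𝒯.e x}) ?_
      exact le_iSup_of_le (𝒯.e y) le_rfl
    exact le_trans (le_trans (𝒯.tens_mono h1 le_rfl) h2) (a.comp _ _)

lemma underV_sep {X : Type u} {a : 𝒯.TCatStr X} (ha : Separated a) : VSep (underV a) := by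
  intro A ra f g hf hg hfg hgf
  apply ha A (pullbackStr a f) f g
  · intro 𝔵 v
    exact le_rfl
  · intro 𝔵 v
    exact le_trans (star_transport hgf 𝔵 (f v)) (whisker a (hfg v) _)
  · intro 𝔶 v
    exact le_antisymm (whisker a (hfg v) 𝔶) (whisker a (hgf v) 𝔶)

/-! ### The categories `Cocompl_sep 𝒯`, `Cat_sep V` and the forgetful functors -/

/-- The category `Cocompl_sep 𝒯` of L-separated cocomplete `𝒯`-categories and left
adjoint `𝒯`-functors. -/
structure CocomplSep (𝒯 : TopTheory V T) : Type (u + 1) where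
  carrier : Type u
  str : 𝒯.TCatStr carrier
  sep : Separated str
  coc : Cocomplete str

instance : CategoryTheory.Category.{u} (CocomplSep 𝒯) where
  Hom A B := {f : A.carrier → B.carrier // IsLeftAdjoint A.str B.str f}
  id A := ⟨id, isLeftAdjoint_id A.str⟩
  comp f g := ⟨g.1 ∘ f.1, f.2.comp g.2⟩
  id_comp f := Subtype.ext rfl
  comp_id f := Subtype.ext rfl
  assoc f g h := Subtype.ext rfl

/-- The forgetful functor `Cocompl_sep 𝒯 → Set`. -/
def forgetToSet (𝒯 : TopTheory V T) : CategoryTheory.Functor (CocomplSep 𝒯) (Type u) where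
  obj A := A.carrier
  map f := TypeCat.ofHom f.1
  map_id A := rfl
  map_comp f g := rfl

/-- The category `Cat_sep V` of L-separated `V`-categories and `V`-functors. -/
structure CatSepV (𝒯 : TopTheory V T) : Type (u + 1) where
  carrier : Type u
  str : 𝒯.VCatStr carrier
  sep : VSep str

instance : CategoryTheory.Category.{u} (CatSepV 𝒯) where
  Hom A B := {f : A.carrier → B.carrier // IsVFunctor A.str B.str f}
  id A := ⟨id, fun _ _ => le_rfl⟩
  comp f g := ⟨g.1 ∘ f.1, fun x y => le_trans (f.2 x y) (g.2 _ _)⟩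
  id_comp f := Subtype.ext rfl
  comp_id f := Subtype.ext rfl
  assoc f g h := Subtype.ext rfl

/-- The forgetful functor `Cocompl_sep 𝒯 → Cat_sep V`, sending `(X,a)` to `(X, a·e_X)`. -/
def forgetToVCat (𝒯 : TopTheory V T) :
    CategoryTheory.Functor (CocomplSep 𝒯) (CatSepV 𝒯) where
  obj A := ⟨A.carrier, underV A.str, underV_sep A.sep⟩
  map {A B} f := ⟨f.1, fun x y => by
    have := f.2.1 (𝒯.e x) y
    rwa [𝒯.e_nat] at this⟩
  map_id A := Subtype.ext rfl
  map_comp f g := Subtype.ext rfl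

/-! ### Auxiliary machinery -/

section Aux

variable {𝒯 : TopTheory V T}

/-- map of composite. -/
lemma map_map {X Y Z : Type u} (𝒯 : TopTheory V T) (f : X → Y) (g : Y → Z) (𝔵 : T X) :
    𝒯.map g (𝒯.map f 𝔵) = 𝒯.map (fun x => g (f x)) 𝔵 :=
  (𝒯.map_comp g f 𝔵).symm

lemma map_id' {X : Type u} (𝒯 : TopTheory V T) (𝔵 : T X) : 𝒯.map (fun x => x) 𝔵 = 𝔵 := by
  have := congrFun (𝒯.map_id (X := X)) 𝔵
  exact this

lemma tens_iSup {ι : Sort*} (𝒯 : TopTheory V T) (u : V) (f : ι → V) :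
    𝒯.tens u (⨆ i, f i) = ⨆ i, 𝒯.tens u (f i) := by
  rw [iSup, 𝒯.tens_sSup, iSup_range]

lemma iSup_tens {ι : Sort*} (𝒯 : TopTheory V T) (u : V) (f : ι → V) :
    𝒯.tens (⨆ i, f i) u = ⨆ i, 𝒯.tens (f i) u := by
  rw [𝒯.tens_comm, 𝒯.tens_iSup]
  exact iSup_congr fun i => 𝒯.tens_comm _ _

lemma tens_bot (𝒯 : TopTheory V T) (u : V) : 𝒯.tens u ⊥ = ⊥ := by
  rw [show (⊥ : V) = sSup (∅ : Set V) by simp, 𝒯.tens_sSup]; simp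

lemma bot_tens (𝒯 : TopTheory V T) (u : V) : 𝒯.tens ⊥ u = ⊥ := by
  rw [𝒯.tens_comm, 𝒯.tens_bot]

lemma tens_unit (𝒯 : TopTheory V T) (u : V) : 𝒯.tens u 𝒯.unit = u := by
  rw [𝒯.tens_comm, 𝒯.unit_tens]

lemma tens_ihom_le (𝒯 : TopTheory V T) (u w : V) : 𝒯.tens u (𝒯.ihom u w) ≤ w := by
  rw [ihom, 𝒯.tens_sSup]
  apply iSup_le; intro v; apply iSup_le; intro hv; exact hv

lemma le_ihom (𝒯 : TopTheory V T) {u z w : V} (h : 𝒯.tens u z ≤ w) : z ≤ 𝒯.ihom u w :=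
  le_sSup h

lemma le_ihom_iff (𝒯 : TopTheory V T) {u z w : V} : z ≤ 𝒯.ihom u w ↔ 𝒯.tens u z ≤ w := by
  constructor
  · intro h
    exact le_trans (𝒯.tens_mono le_rfl h) (𝒯.tens_ihom_le u w)
  · exact 𝒯.le_ihom

lemma unit_le_ihom_iff (𝒯 : TopTheory V T) {u w : V} : 𝒯.unit ≤ 𝒯.ihom u w ↔ u ≤ w := by
  rw [𝒯.le_ihom_iff, 𝒯.tens_unit]

lemma ihom_mono (𝒯 : TopTheory V T) {u w w' : V} (h : w ≤ w') : 𝒯.ihom u w ≤ 𝒯.ihom u w' :=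
  𝒯.le_ihom (le_trans (𝒯.tens_ihom_le u w) h)

lemma ihom_anti (𝒯 : TopTheory V T) {u u' w : V} (h : u ≤ u') : 𝒯.ihom u' w ≤ 𝒯.ihom u w :=
  𝒯.le_ihom (le_trans (𝒯.tens_mono h le_rfl) (𝒯.tens_ihom_le u' w))

lemma ihom_iSup_left {ι : Sort*} (𝒯 : TopTheory V T) (f : ι → V) (w : V) :
    𝒯.ihom (⨆ i, f i) w = ⨅ i, 𝒯.ihom (f i) w := by
  apply le_antisymm
  · exact le_iInf fun i => 𝒯.ihom_anti (le_iSup f i)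
  · apply 𝒯.le_ihom
    rw [𝒯.iSup_tens]
    apply iSup_le; intro i
    exact le_trans (𝒯.tens_mono le_rfl (iInf_le _ i)) (𝒯.tens_ihom_le _ _)

lemma ihom_iInf {ι : Sort*} (𝒯 : TopTheory V T) (u : V) (f : ι → V) :
    𝒯.ihom u (⨅ i, f i) = ⨅ i, 𝒯.ihom u (f i) := by
  apply le_antisymm
  · exact le_iInf fun i => 𝒯.ihom_mono (iInf_le _ i)
  · apply 𝒯.le_ihom
    refine le_iInf fun i => ?_
    exact le_trans (𝒯.tens_mono le_rfl (iInf_le _ i)) (𝒯.tens_ihom_le _ _)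

lemma prop_tens (𝒯 : TopTheory V T) (P : Prop) (x : V) :
    𝒯.tens (⨆ _ : P, 𝒯.unit) x = ⨆ _ : P, x := by
  rw [𝒯.iSup_tens]
  exact iSup_congr fun _ => 𝒯.unit_tens x

end Aux

section TxiLemmas

variable (𝒯 : TopTheory V T)

lemma Txi_mono' {X Y : Type u} {r s : X → Y → V} (h : ∀ x y, r x y ≤ s x y)
    (𝔵 : T X) (𝔶 : T Y) : 𝒯.Txi r 𝔵 𝔶 ≤ 𝒯.Txi s 𝔵 𝔶 :=
  iSup_le fun 𝔴 => le_iSup_of_le 𝔴 (𝒯.xi_mono _ _ (fun p => h p.1 p.2) 𝔴.1)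

lemma xi_le_Txi {A B C : Type u} (r : A → B → V) (j₁ : C → A) (j₂ : C → B) (𝔠 : T C) :
    𝒯.xi (𝒯.map (fun c => r (j₁ c) (j₂ c)) 𝔠) ≤ 𝒯.Txi r (𝒯.map j₁ 𝔠) (𝒯.map j₂ 𝔠) := by
  refine le_iSup_of_le ⟨𝒯.map (fun c => (j₁ c, j₂ c)) 𝔠, ?_, ?_⟩ (le_of_eq ?_)
  · rw [map_map]
  · rw [map_map]
  · rw [map_map]

lemma unit_le_Txi {A B C : Type u} (r : A → B → V) (j₁ : C → A) (j₂ : C → B) (𝔠 : T C)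
    (h : ∀ c, 𝒯.unit ≤ r (j₁ c) (j₂ c)) :
    𝒯.unit ≤ 𝒯.Txi r (𝒯.map j₁ 𝔠) (𝒯.map j₂ 𝔠) := by
  refine le_trans ?_ (𝒯.xi_le_Txi r j₁ j₂ 𝔠)
  rw [← 𝒯.xi_unit 𝔠]
  exact 𝒯.xi_mono _ _ h 𝔠

lemma Txi_map_right {A B B' : Type u} (r : A → B' → V) (v : B → B') (𝔞 : T A) (𝔟 : T B) :
    𝒯.Txi r 𝔞 (𝒯.map v 𝔟) = 𝒯.Txi (fun a b => r a (v b)) 𝔞 𝔟 := by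
  apply le_antisymm
  · apply iSup_le
    rintro ⟨𝔴, hw1, hw2⟩
    obtain ⟨𝔲, hu1, hu2⟩ := 𝒯.map_bc Prod.snd v 𝔴 𝔟 hw2
    refine le_iSup_of_le ⟨𝒯.map (fun q => (q.1.1.1, q.1.2)) 𝔲, ?_, ?_⟩ (le_of_eq ?_)
    · calc 𝒯.map Prod.fst (𝒯.map (fun q : {p : (A × B') × B // p.1.2 = v p.2} =>
            (q.1.1.1, q.1.2)) 𝔲) = 𝒯.map (fun q => q.1.1.1) 𝔲 := by rw [map_map]
        _ = 𝒯.map Prod.fst (𝒯.map (fun q : {p : (A × B') × B // p.1.2 = v p.2} => q.1.1) 𝔲) := by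
            rw [map_map]
        _ = 𝔞 := by rw [hu1, hw1]
    · calc 𝒯.map Prod.snd (𝒯.map (fun q : {p : (A × B') × B // p.1.2 = v p.2} =>
            (q.1.1.1, q.1.2)) 𝔲) = 𝒯.map (fun q => q.1.2) 𝔲 := by rw [map_map]
        _ = 𝔟 := hu2
    · have hval : (fun q : {p : (A × B') × B // p.1.2 = v p.2} => r q.1.1.1 q.1.1.2)
          = fun q => r q.1.1.1 (v q.1.2) := funext fun q => by rw [q.2]
      calc 𝒯.xi (𝒯.map (fun p : A × B' => r p.1 p.2) 𝔴)
          = 𝒯.xi (𝒯.map (fun p : A × B' => r p.1 p.2)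
              (𝒯.map (fun q : {p : (A × B') × B // p.1.2 = v p.2} => q.1.1) 𝔲)) := by rw [hu1]
        _ = 𝒯.xi (𝒯.map (fun q : {p : (A × B') × B // p.1.2 = v p.2} => r q.1.1.1 q.1.1.2) 𝔲) := by
            rw [map_map]
        _ = 𝒯.xi (𝒯.map (fun q : {p : (A × B') × B // p.1.2 = v p.2} => r q.1.1.1 (v q.1.2)) 𝔲) := by
            rw [hval]
        _ = 𝒯.xi (𝒯.map (fun p : A × B => r p.1 (v p.2))
              (𝒯.map (fun q : {p : (A × B') × B // p.1.2 = v p.2} => (q.1.1.1, q.1.2)) 𝔲)) := by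
            rw [map_map]
  · have h := 𝒯.Txi_comp_le r id v 𝔞 𝔟
    rwa [show 𝒯.map id 𝔞 = 𝔞 from congrFun 𝒯.map_id 𝔞] at h

lemma Txi_map_left {A A' B : Type u} (r : A' → B → V) (u : A → A') (𝔞 : T A) (𝔟 : T B) :
    𝒯.Txi r (𝒯.map u 𝔞) 𝔟 = 𝒯.Txi (fun a b => r (u a) b) 𝔞 𝔟 := by
  apply le_antisymm
  · apply iSup_le
    rintro ⟨𝔴, hw1, hw2⟩
    obtain ⟨𝔲, hu1, hu2⟩ := 𝒯.map_bc Prod.fst u 𝔴 𝔞 hw1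
    refine le_iSup_of_le ⟨𝒯.map (fun q => (q.1.2, q.1.1.2)) 𝔲, ?_, ?_⟩ (le_of_eq ?_)
    · calc 𝒯.map Prod.fst (𝒯.map (fun q : {p : (A' × B) × A // p.1.1 = u p.2} =>
            (q.1.2, q.1.1.2)) 𝔲) = 𝒯.map (fun q => q.1.2) 𝔲 := by rw [map_map]
        _ = 𝔞 := hu2
    · calc 𝒯.map Prod.snd (𝒯.map (fun q : {p : (A' × B) × A // p.1.1 = u p.2} =>
            (q.1.2, q.1.1.2)) 𝔲) = 𝒯.map (fun q => q.1.1.2) 𝔲 := by rw [map_map]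
        _ = 𝒯.map Prod.snd (𝒯.map (fun q : {p : (A' × B) × A // p.1.1 = u p.2} => q.1.1) 𝔲) := by
            rw [map_map]
        _ = 𝔟 := by rw [hu1, hw2]
    · have hval : (fun q : {p : (A' × B) × A // p.1.1 = u p.2} => r q.1.1.1 q.1.1.2)
          = fun q => r (u q.1.2) q.1.1.2 := funext fun q => by rw [q.2]
      calc 𝒯.xi (𝒯.map (fun p : A' × B => r p.1 p.2) 𝔴)
          = 𝒯.xi (𝒯.map (fun p : A' × B => r p.1 p.2)
              (𝒯.map (fun q : {p : (A' × B) × A // p.1.1 = u p.2} => q.1.1) 𝔲)) := by rw [hu1]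
        _ = 𝒯.xi (𝒯.map (fun q : {p : (A' × B) × A // p.1.1 = u p.2} => r q.1.1.1 q.1.1.2) 𝔲) := by
            rw [map_map]
        _ = 𝒯.xi (𝒯.map (fun q : {p : (A' × B) × A // p.1.1 = u p.2} => r (u q.1.2) q.1.1.2) 𝔲) := by
            rw [hval]
        _ = 𝒯.xi (𝒯.map (fun p : A × B => r (u p.1) p.2)
              (𝒯.map (fun q : {p : (A' × B) × A // p.1.1 = u p.2} => (q.1.2, q.1.1.2)) 𝔲)) := by
            rw [map_map]
  · have h := 𝒯.Txi_comp_le r u id 𝔞 𝔟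
    rwa [show 𝒯.map id 𝔟 = 𝔟 from congrFun 𝒯.map_id 𝔟] at h

lemma Txi_cograph {A B : Type u} (g : B → A) (𝔞 : T A) (𝔟 : T B) :
    𝒯.Txi (fun a b => ⨆ _ : g b = a, 𝒯.unit) 𝔞 𝔟 = ⨆ _ : 𝒯.map g 𝔟 = 𝔞, 𝒯.unit := by
  apply le_antisymm
  · apply iSup_le
    rintro ⟨𝔴, hw1, hw2⟩
    have hfun : (fun p : A × B => ⨆ _ : g p.2 = p.1, 𝒯.unit)
        = fun p => ⨆ x : {x : B // (fun b : B => (g b, b)) x = p}, (fun _ : B => 𝒯.unit) x.1 := by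
      funext p
      apply le_antisymm
      · exact iSup_le fun h => le_iSup_of_le ⟨p.2, by show (g p.2, p.2) = p; rw [h]⟩ le_rfl
      · refine iSup_le fun x => ?_
        have : g p.2 = p.1 := by rw [← x.2]
        exact le_iSup_of_le this le_rfl
    have hnat := 𝒯.xi_nat (fun b : B => (g b, b)) (fun _ => 𝒯.unit) 𝔴
    rw [hfun, ← hnat]
    apply iSup_le
    rintro ⟨𝔳, hv⟩
    have h1 : 𝒯.map g 𝔟 = 𝔞 := by
      have e1 : 𝒯.map g 𝔳 = 𝔞 := by
        rw [← hw1, ← hv, map_map]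
      have e2 : 𝔳 = 𝔟 := by
        rw [← hw2, ← hv, map_map, map_id']
      rw [← e2]; exact e1
    rw [𝒯.xi_unit]
    exact le_iSup_of_le h1 le_rfl
  · apply iSup_le
    intro h
    have hv : (fun b : B => ⨆ _ : g b = g b, 𝒯.unit) = fun _ : B => 𝒯.unit :=
      funext fun b => by simp
    refine le_iSup_of_le ⟨𝒯.map (fun b => (g b, b)) 𝔟, ?_, ?_⟩ (le_of_eq ?_)
    · rw [map_map]; exact h
    · rw [map_map, map_id']
    · rw [map_map]
      show 𝒯.unit = 𝒯.xi (𝒯.map (fun b : B => ⨆ _ : g b = g b, 𝒯.unit) 𝔟)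
      rw [hv, 𝒯.xi_unit]

/-- composition of `V`-relations. -/
def vcomp (𝒯 : TopTheory V T) {A B C : Type u} (r : A → B → V) (s : B → C → V) :
    A → C → V := fun a c => ⨆ b, 𝒯.tens (r a b) (s b c)

lemma Txi_vcomp_le {A B C : Type u} (r : A → B → V) (s : B → C → V) (𝔞 : T A) (𝔠 : T C) :
    𝒯.Txi (𝒯.vcomp r s) 𝔞 𝔠 ≤ ⨆ 𝔟 : T B, 𝒯.tens (𝒯.Txi r 𝔞 𝔟) (𝒯.Txi s 𝔟 𝔠) := by
  apply iSup_le
  rintro ⟨𝔴, hw1, hw2⟩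
  have hfun : (fun p : A × C => 𝒯.vcomp r s p.1 p.2)
      = fun p => ⨆ w : {w : A × B × C // (fun w : A × B × C => (w.1, w.2.2)) w = p},
          (fun w : A × B × C => 𝒯.tens (r w.1 w.2.1) (s w.2.1 w.2.2)) w.1 := by
    funext p
    apply le_antisymm
    · refine iSup_le fun b => ?_
      exact le_iSup_of_le (⟨(p.1, b, p.2), rfl⟩ :
        {w : A × B × C // (fun w : A × B × C => (w.1, w.2.2)) w = p}) le_rfl
    · refine iSup_le ?_
      rintro ⟨⟨a', b', c'⟩, rfl⟩
      exact le_iSup_of_le b' le_rfl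
  have hnat := 𝒯.xi_nat (fun w : A × B × C => (w.1, w.2.2))
    (fun w : A × B × C => 𝒯.tens (r w.1 w.2.1) (s w.2.1 w.2.2)) 𝔴
  rw [show (fun p : A × C => 𝒯.vcomp r s p.1 p.2) = _ from hfun, ← hnat]
  apply iSup_le
  rintro ⟨𝔳, hv⟩
  have e1 : 𝒯.map (fun w : A × B × C => w.1) 𝔳 = 𝔞 := by
    rw [← hw1, ← hv, map_map]
  have e3 : 𝒯.map (fun w : A × B × C => w.2.2) 𝔳 = 𝔠 := by
    rw [← hw2, ← hv, map_map]
  have htens := 𝒯.xi_tens (𝒯.map (fun w : A × B × C => (r w.1 w.2.1, s w.2.1 w.2.2)) 𝔳)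
  rw [map_map, map_map, map_map] at htens
  have hr := 𝒯.xi_le_Txi r (fun w : A × B × C => w.1) (fun w => w.2.1) 𝔳
  have hs := 𝒯.xi_le_Txi s (fun w : A × B × C => w.2.1) (fun w => w.2.2) 𝔳
  rw [e1] at hr
  rw [e3] at hs
  calc 𝒯.xi (𝒯.map (fun w : A × B × C => 𝒯.tens (r w.1 w.2.1) (s w.2.1 w.2.2)) 𝔳)
      = 𝒯.tens (𝒯.xi (𝒯.map (fun w : A × B × C => r w.1 w.2.1) 𝔳))
          (𝒯.xi (𝒯.map (fun w : A × B × C => s w.2.1 w.2.2) 𝔳)) := htens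
    _ ≤ 𝒯.tens (𝒯.Txi r 𝔞 (𝒯.map (fun w : A × B × C => w.2.1) 𝔳))
          (𝒯.Txi s (𝒯.map (fun w : A × B × C => w.2.1) 𝔳) 𝔠) := 𝒯.tens_mono hr hs
    _ ≤ _ := le_iSup_of_le (𝒯.map (fun w : A × B × C => w.2.1) 𝔳) le_rfl

lemma tens_Txi_Txi_le {A B C : Type u} (r : A → B → V) (s : B → C → V)
    (𝔞 : T A) (𝔟 : T B) (𝔠 : T C) :
    𝒯.tens (𝒯.Txi r 𝔞 𝔟) (𝒯.Txi s 𝔟 𝔠) ≤ 𝒯.Txi (𝒯.vcomp r s) 𝔞 𝔠 := by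
  rw [Txi, iSup_tens]
  apply iSup_le
  rintro ⟨𝔴₁, hw11, hw12⟩
  rw [Txi, tens_iSup]
  apply iSup_le
  rintro ⟨𝔴₂, hw21, hw22⟩
  obtain ⟨𝔲, hu1, hu2⟩ := 𝒯.map_bc Prod.snd Prod.fst 𝔴₁ 𝔴₂ (hw12.trans hw21.symm)
  have htens := 𝒯.xi_tens (𝒯.map (fun q : {p : (A × B) × B × C // p.1.2 = p.2.1} =>
    (r q.1.1.1 q.1.1.2, s q.1.2.1 q.1.2.2)) 𝔲)
  rw [map_map, map_map, map_map] at htens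
  have hre : 𝒯.map (fun q : {p : (A × B) × B × C // p.1.2 = p.2.1} => r q.1.1.1 q.1.1.2) 𝔲
      = 𝒯.map (fun p : A × B => r p.1 p.2) 𝔴₁ := by
    rw [← hu1, map_map]
  have hse : 𝒯.map (fun q : {p : (A × B) × B × C // p.1.2 = p.2.1} => s q.1.2.1 q.1.2.2) 𝔲
      = 𝒯.map (fun p : B × C => s p.1 p.2) 𝔴₂ := by
    rw [← hu2, map_map]
  rw [hre, hse] at htens
  have hmono : ∀ q : {p : (A × B) × B × C // p.1.2 = p.2.1},
      𝒯.tens (r q.1.1.1 q.1.1.2) (s q.1.2.1 q.1.2.2) ≤ 𝒯.vcomp r s q.1.1.1 q.1.2.2 :=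
    fun q => le_iSup_of_le q.1.2.1 (le_of_eq (by rw [q.2]))
  have hTxi := 𝒯.xi_le_Txi (𝒯.vcomp r s)
    (fun q : {p : (A × B) × B × C // p.1.2 = p.2.1} => q.1.1.1) (fun q => q.1.2.2) 𝔲
  have e1 : 𝒯.map (fun q : {p : (A × B) × B × C // p.1.2 = p.2.1} => q.1.1.1) 𝔲 = 𝔞 := by
    rw [← hw11, ← hu1, map_map]
  have e2 : 𝒯.map (fun q : {p : (A × B) × B × C // p.1.2 = p.2.1} => q.1.2.2) 𝔲 = 𝔠 := by
    rw [← hw22, ← hu2, map_map]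
  rw [e1, e2] at hTxi
  calc 𝒯.tens (𝒯.xi (𝒯.map (fun p : A × B => r p.1 p.2) 𝔴₁))
        (𝒯.xi (𝒯.map (fun p : B × C => s p.1 p.2) 𝔴₂))
      = 𝒯.xi (𝒯.map (fun q : {p : (A × B) × B × C // p.1.2 = p.2.1} =>
          𝒯.tens (r q.1.1.1 q.1.1.2) (s q.1.2.1 q.1.2.2)) 𝔲) := htens.symm
    _ ≤ 𝒯.xi (𝒯.map (fun q : {p : (A × B) × B × C // p.1.2 = p.2.1} =>
          𝒯.vcomp r s q.1.1.1 q.1.2.2) 𝔲) := 𝒯.xi_mono _ _ hmono 𝔲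
    _ ≤ _ := hTxi

lemma Txi_Txi_le {A B : Type u} (r : A → B → V) (𝔄 : T (T A)) (𝔅 : T (T B)) :
    𝒯.Txi (𝒯.Txi r) 𝔄 𝔅 ≤ 𝒯.Txi r (𝒯.m 𝔄) (𝒯.m 𝔅) := by
  apply iSup_le
  rintro ⟨𝔘, hU1, hU2⟩
  have hfun : (fun P : T A × T B => 𝒯.Txi r P.1 P.2)
      = fun P => ⨆ w : {w : T (A × B) //
          (fun w : T (A × B) => (𝒯.map Prod.fst w, 𝒯.map Prod.snd w)) w = P},
          (fun w : T (A × B) => 𝒯.xi (𝒯.map (fun p : A × B => r p.1 p.2) w)) w.1 := by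
    funext P
    apply le_antisymm
    · refine iSup_le fun w => ?_
      exact le_iSup_of_le (⟨w.1, by
        show (𝒯.map Prod.fst w.1, 𝒯.map Prod.snd w.1) = P
        rw [w.2.1, w.2.2]⟩ :
        {w' : T (A × B) //
          (fun w' : T (A × B) => (𝒯.map Prod.fst w', 𝒯.map Prod.snd w')) w' = P}) le_rfl
    · refine iSup_le ?_
      rintro ⟨w, rfl⟩
      exact le_iSup_of_le ⟨w, rfl, rfl⟩ le_rfl
  have hnat := 𝒯.xi_nat (fun w : T (A × B) => (𝒯.map Prod.fst w, 𝒯.map Prod.snd w))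
    (fun w : T (A × B) => 𝒯.xi (𝒯.map (fun p : A × B => r p.1 p.2) w)) 𝔘
  rw [show (fun P : T A × T B => 𝒯.Txi r P.1 P.2) = _ from hfun, ← hnat]
  apply iSup_le
  rintro ⟨𝔳, hv⟩
  have key : 𝒯.xi (𝒯.map (fun w : T (A × B) =>
      𝒯.xi (𝒯.map (fun p : A × B => r p.1 p.2) w)) 𝔳)
      = 𝒯.xi (𝒯.map (fun p : A × B => r p.1 p.2) (𝒯.m 𝔳)) := by
    rw [𝒯.m_nat, 𝒯.xi_m, map_map]
  rw [key]
  have e1 : 𝒯.map Prod.fst (𝒯.m 𝔳) = 𝒯.m 𝔄 := by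
    rw [𝒯.m_nat, ← hU1, ← hv, map_map]
  have e2 : 𝒯.map Prod.snd (𝒯.m 𝔳) = 𝒯.m 𝔅 := by
    rw [𝒯.m_nat, ← hU2, ← hv, map_map]
  exact le_iSup_of_le ⟨𝒯.m 𝔳, e1, e2⟩ le_rfl

lemma Txi_m_le {A B : Type u} (r : A → B → V) (𝔞 : T A) (𝔅 : T (T B)) :
    𝒯.Txi r 𝔞 (𝒯.m 𝔅) ≤ ⨆ 𝔄 : {𝔄 : T (T A) // 𝒯.m 𝔄 = 𝔞}, 𝒯.Txi (𝒯.Txi r) 𝔄.1 𝔅 := by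
  apply iSup_le
  rintro ⟨𝔴, hw1, hw2⟩
  obtain ⟨𝔛, hX1, hX2⟩ := 𝒯.m_bc Prod.snd 𝔅 𝔴 hw2.symm
  have hm : 𝒯.m (𝒯.map (𝒯.map Prod.fst) 𝔛) = 𝔞 := by
    rw [← 𝒯.m_nat, hX2, hw1]
  have key : 𝒯.xi (𝒯.map (fun p : A × B => r p.1 p.2) 𝔴)
      = 𝒯.xi (𝒯.map (fun w : T (A × B) => 𝒯.xi (𝒯.map (fun p : A × B => r p.1 p.2) w)) 𝔛) := by
    rw [← hX2, 𝒯.m_nat, 𝒯.xi_m, map_map]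
  have hmono : ∀ w : T (A × B), 𝒯.xi (𝒯.map (fun p : A × B => r p.1 p.2) w)
      ≤ 𝒯.Txi r (𝒯.map Prod.fst w) (𝒯.map Prod.snd w) :=
    fun w => le_iSup_of_le ⟨w, rfl, rfl⟩ le_rfl
  have hTxi := 𝒯.xi_le_Txi (𝒯.Txi r) (𝒯.map Prod.fst) (𝒯.map Prod.snd) 𝔛
  rw [hX1] at hTxi
  refine le_iSup_of_le ⟨𝒯.map (𝒯.map Prod.fst) 𝔛, hm⟩ ?_
  calc 𝒯.xi (𝒯.map (fun p : A × B => r p.1 p.2) 𝔴)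
      = 𝒯.xi (𝒯.map (fun w : T (A × B) =>
          𝒯.xi (𝒯.map (fun p : A × B => r p.1 p.2) w)) 𝔛) := key
    _ ≤ 𝒯.xi (𝒯.map (fun w : T (A × B) =>
          𝒯.Txi r (𝒯.map Prod.fst w) (𝒯.map Prod.snd w)) 𝔛) := 𝒯.xi_mono _ _ hmono 𝔛
    _ ≤ _ := hTxi

end TxiLemmas

section PresheafInfra

variable {𝒯 : TopTheory V T} {X : Type u}

/-- The evaluation relation `X̂ ⇸ X`-ish: `EVr a 𝔵 ψ = ψ 𝔵`. -/
def EVr (a : 𝒯.TCatStr X) : T X → Hat a → V := fun 𝔵 ψ => ψ.1 𝔵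

lemma tens_unitRel (𝒯 : TopTheory V T) (x : V) (𝔶 : T PUnit.{u + 1}) :
    𝒯.tens x (𝒯.unitRel PUnit 𝔶 PUnit.unit) = ⨆ _ : 𝔶 = 𝒯.e PUnit.unit, x := by
  rw [unitRel, 𝒯.tens_comm, 𝒯.prop_tens]

lemma presheaf_cond1 {a : 𝒯.TCatStr X} (ψ : Hat a) (𝔷 : T (T X)) (𝔵 : T X) :
    𝒯.tens (𝒯.Txi a.rel 𝔷 𝔵) (ψ.1 𝔵) ≤ ψ.1 (𝒯.m 𝔷) := by
  refine le_trans ?_ (ψ.2.1 (𝒯.m 𝔷) PUnit.unit)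
  exact le_iSup_of_le ⟨𝔷, rfl⟩ (le_iSup_of_le 𝔵 le_rfl)

lemma presheaf_cond2 {a : 𝒯.TCatStr X} (ψ : Hat a) (𝔷 : T (T X)) :
    𝒯.Txi (fun (𝔵 : T X) (_ : PUnit.{u + 1}) => ψ.1 𝔵) 𝔷 (𝒯.e PUnit.unit) ≤ ψ.1 (𝒯.m 𝔷) := by
  refine le_trans ?_ (ψ.2.2 (𝒯.m 𝔷) PUnit.unit)
  refine le_iSup_of_le ⟨𝔷, rfl⟩ (le_iSup_of_le (𝒯.e PUnit.unit) ?_)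
  rw [𝒯.tens_unitRel]
  exact le_iSup_of_le rfl le_rfl

lemma isPresheaf_of (a : 𝒯.TCatStr X) (F : T X → V)
    (h1 : ∀ (𝔷 : T (T X)) (𝔵 : T X), 𝒯.tens (𝒯.Txi a.rel 𝔷 𝔵) (F 𝔵) ≤ F (𝒯.m 𝔷))
    (h2 : ∀ 𝔷 : T (T X),
      𝒯.Txi (fun (𝔵 : T X) (_ : PUnit.{u + 1}) => F 𝔵) 𝔷 (𝒯.e PUnit.unit) ≤ F (𝒯.m 𝔷)) :
    IsPresheaf a F := by
  constructor
  · intro 𝔵 u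
    apply iSup_le; rintro ⟨𝔷, rfl⟩
    apply iSup_le; intro 𝔶
    exact h1 𝔷 𝔶
  · intro 𝔵 u
    apply iSup_le; rintro ⟨𝔷, rfl⟩
    apply iSup_le; intro 𝔶
    rw [show u = PUnit.unit from rfl, 𝒯.tens_unitRel]
    apply iSup_le; rintro rfl
    exact h2 𝔷

/-- `Txi` of a `PUnit`-valued relation obtained by fixing a point. -/
lemma Txi_punit_const {A B : Type u} (𝒯 : TopTheory V T) (r : T A → B → V) (b₀ : B)
    (𝔷 : T (T A)) :
    𝒯.Txi (fun (𝔞 : T A) (_ : PUnit.{u + 1}) => r 𝔞 b₀) 𝔷 (𝒯.e PUnit.unit)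
      = 𝒯.Txi r 𝔷 (𝒯.e b₀) := by
  rw [← 𝒯.e_nat (fun _ : PUnit.{u + 1} => b₀) PUnit.unit, 𝒯.Txi_map_right]

lemma isPresheaf_rep (a : 𝒯.TCatStr X) (x : X) : IsPresheaf a (fun 𝔵 => a.rel 𝔵 x) := by
  apply isPresheaf_of
  · intro 𝔷 𝔵
    refine le_trans ?_ (a.comp (𝒯.m 𝔷) x)
    exact le_iSup_of_le ⟨𝔷, rfl⟩ (le_iSup_of_le 𝔵 le_rfl)
  · intro 𝔷
    rw [𝒯.Txi_punit_const a.rel x 𝔷]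
    refine le_trans ?_ (a.comp (𝒯.m 𝔷) x)
    refine le_iSup_of_le ⟨𝔷, rfl⟩ (le_iSup_of_le (𝒯.e x) ?_)
    calc 𝒯.Txi a.rel 𝔷 (𝒯.e x) = 𝒯.tens (𝒯.Txi a.rel 𝔷 (𝒯.e x)) 𝒯.unit := (𝒯.tens_unit _).symm
      _ ≤ _ := 𝒯.tens_mono le_rfl (a.le_refl x)

/-- The canonical Yoneda embedding. -/
def yon (a : 𝒯.TCatStr X) : X → Hat a := fun x => ⟨fun 𝔵 => a.rel 𝔵 x, isPresheaf_rep a x⟩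

lemma yon_isYoneda (a : 𝒯.TCatStr X) : IsYoneda a (yon a) := fun _ _ => rfl

lemma eq_yon {a : 𝒯.TCatStr X} {y : X → Hat a} (hy : IsYoneda a y) : y = yon a :=
  funext fun x => Subtype.ext (funext fun 𝔵 => hy x 𝔵)

/-- The fundamental formula for the presheaf `𝒯`-category structure. -/
lemma powRel_val_eq (a : 𝒯.TCatStr X) (𝔭 : T (Hat a)) (ψ : Hat a) :
    𝒯.powRel X (𝒯.map Subtype.val 𝔭) ψ.1
      = ⨅ 𝔷 : T (T X), 𝒯.ihom (𝒯.Txi (EVr a) 𝔷 𝔭) (ψ.1 (𝒯.m 𝔷)) := by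
  have hE : ∀ 𝔷 : T (T X),
      𝒯.Txi (fun (𝔵 : T X) (φ : T X → V) => φ 𝔵) 𝔷 (𝒯.map Subtype.val 𝔭)
        = 𝒯.Txi (EVr a) 𝔷 𝔭 := fun 𝔷 => 𝒯.Txi_map_right _ _ 𝔷 𝔭
  apply le_antisymm
  · apply le_iInf; intro 𝔷
    apply 𝒯.le_ihom
    rw [← hE 𝔷, Txi, iSup_tens]
    apply iSup_le
    rintro ⟨𝔴, hw1, hw2⟩
    have hcomp : 𝒯.powRel X (𝒯.map Subtype.val 𝔭) ψ.1
        ≤ 𝒯.ihom (𝒯.xi (𝒯.map (fun p : T X × (T X → V) => p.2 p.1) 𝔴))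
            (ψ.1 (𝒯.m (𝒯.map Prod.fst 𝔴))) :=
      iInf_le _ (⟨𝔴, hw2⟩ : {q : T (T X × (T X → V)) // 𝒯.map Prod.snd q = 𝒯.map Subtype.val 𝔭})
    rw [hw1] at hcomp
    exact le_trans (𝒯.tens_mono le_rfl hcomp) (𝒯.tens_ihom_le _ _)
  · apply le_iInf
    rintro ⟨𝔮, h𝔮⟩
    refine le_trans (iInf_le _ (𝒯.map Prod.fst 𝔮)) ?_
    apply 𝒯.ihom_anti
    rw [← hE]
    exact le_iSup_of_le ⟨𝔮, rfl, h𝔮⟩ le_rfl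

lemma raw_hatRel_le (a : 𝒯.TCatStr X) (𝔷 : T (T X)) (𝔭 : T (Hat a)) (ψ : Hat a) :
    𝒯.tens (𝒯.Txi (EVr a) 𝔷 𝔭) (𝒯.powRel X (𝒯.map Subtype.val 𝔭) ψ.1) ≤ ψ.1 (𝒯.m 𝔷) := by
  rw [powRel_val_eq]
  exact le_trans (𝒯.tens_mono le_rfl (iInf_le _ 𝔷)) (𝒯.tens_ihom_le _ _)

lemma hatRel_eq {a : 𝒯.TCatStr X} {hs : 𝒯.TCatStr (Hat a)} (hhs : IsHatStr a hs)
    (𝔭 : T (Hat a)) (ψ : Hat a) :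
    hs.rel 𝔭 ψ = ⨅ 𝔷 : T (T X), 𝒯.ihom (𝒯.Txi (EVr a) 𝔷 𝔭) (ψ.1 (𝒯.m 𝔷)) := by
  rw [hhs, powRel_val_eq]

lemma hatRel_le {a : 𝒯.TCatStr X} {hs : 𝒯.TCatStr (Hat a)} (hhs : IsHatStr a hs)
    (𝔷 : T (T X)) (𝔭 : T (Hat a)) (ψ : Hat a) :
    𝒯.tens (𝒯.Txi (EVr a) 𝔷 𝔭) (hs.rel 𝔭 ψ) ≤ ψ.1 (𝒯.m 𝔷) := by
  rw [hhs]
  exact raw_hatRel_le a 𝔷 𝔭 ψ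

lemma le_hatRel {a : 𝒯.TCatStr X} {hs : 𝒯.TCatStr (Hat a)} (hhs : IsHatStr a hs)
    {w : V} {𝔭 : T (Hat a)} {ψ : Hat a}
    (h : ∀ 𝔷 : T (T X), 𝒯.tens (𝒯.Txi (EVr a) 𝔷 𝔭) w ≤ ψ.1 (𝒯.m 𝔷)) :
    w ≤ hs.rel 𝔭 ψ := by
  rw [hatRel_eq hhs]
  exact le_iInf fun 𝔷 => 𝒯.le_ihom (h 𝔷)

lemma hatRel_mono {a : 𝒯.TCatStr X} {hs : 𝒯.TCatStr (Hat a)} (hhs : IsHatStr a hs)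
    {𝔭 : T (Hat a)} {ψ ψ' : Hat a} (h : ∀ 𝔵, ψ.1 𝔵 ≤ ψ'.1 𝔵) :
    hs.rel 𝔭 ψ ≤ hs.rel 𝔭 ψ' := by
  rw [hatRel_eq hhs, hatRel_eq hhs]
  exact le_iInf fun 𝔷 => le_trans (iInf_le _ 𝔷) (𝒯.ihom_mono (h _))

/-- The Yoneda lemma. -/
lemma yoneda_eval {a : 𝒯.TCatStr X} {hs : 𝒯.TCatStr (Hat a)} {y : X → Hat a}
    (hhs : IsHatStr a hs) (hy : IsYoneda a y) (𝔵 : T X) (ψ : Hat a) :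
    hs.rel (𝒯.map y 𝔵) ψ = ψ.1 𝔵 := by
  apply le_antisymm
  · have hTxi : 𝒯.unit ≤ 𝒯.Txi (EVr a) (𝒯.map 𝒯.e 𝔵) (𝒯.map y 𝔵) := by
      refine 𝒯.unit_le_Txi (EVr a) 𝒯.e y 𝔵 fun x => ?_
      rw [show EVr a (𝒯.e x) (y x) = a.rel (𝒯.e x) x from hy x (𝒯.e x)]
      exact a.le_refl x
    calc hs.rel (𝒯.map y 𝔵) ψ = 𝒯.tens 𝒯.unit (hs.rel (𝒯.map y 𝔵) ψ) := (𝒯.unit_tens _).symm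
      _ ≤ 𝒯.tens (𝒯.Txi (EVr a) (𝒯.map 𝒯.e 𝔵) (𝒯.map y 𝔵)) (hs.rel (𝒯.map y 𝔵) ψ) :=
          𝒯.tens_mono hTxi le_rfl
      _ ≤ ψ.1 (𝒯.m (𝒯.map 𝒯.e 𝔵)) := hatRel_le hhs _ _ _
      _ = ψ.1 𝔵 := by rw [𝒯.m_map_e]
  · apply le_hatRel hhs
    intro 𝔷
    have hE : 𝒯.Txi (EVr a) 𝔷 (𝒯.map y 𝔵) = 𝒯.Txi a.rel 𝔷 𝔵 := by
      rw [𝒯.Txi_map_right]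
      congr 1
      funext 𝔷₀ x₀
      exact hy x₀ 𝔷₀
    rw [hE]
    exact presheaf_cond1 ψ 𝔷 𝔵

lemma yoneda_functor {a : 𝒯.TCatStr X} {hs : 𝒯.TCatStr (Hat a)} {y : X → Hat a}
    (hhs : IsHatStr a hs) (hy : IsYoneda a y) : IsTFunctor a hs y := by
  intro 𝔵 x
  rw [yoneda_eval hhs hy, hy]

/-- order reflection: `k ≤ X̂(eψ, ψ') ↔ ψ ≤ ψ'` pointwise. -/
lemma unit_le_hatRel_iff {a : 𝒯.TCatStr X} {hs : 𝒯.TCatStr (Hat a)} (hhs : IsHatStr a hs)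
    (χ ψ : Hat a) :
    𝒯.unit ≤ hs.rel (𝒯.e χ) ψ ↔ ∀ 𝔵, χ.1 𝔵 ≤ ψ.1 𝔵 := by
  constructor
  · intro h 𝔵
    have h1 : 𝒯.tens (𝒯.Txi (EVr a) (𝒯.e 𝔵) (𝒯.e χ)) (hs.rel (𝒯.e χ) ψ)
        ≤ ψ.1 (𝒯.m (𝒯.e 𝔵)) := hatRel_le hhs _ _ _
    rw [𝒯.m_e] at h1
    calc χ.1 𝔵 = 𝒯.tens (EVr a 𝔵 χ) 𝒯.unit := (𝒯.tens_unit _).symm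
      _ ≤ 𝒯.tens (𝒯.Txi (EVr a) (𝒯.e 𝔵) (𝒯.e χ)) (hs.rel (𝒯.e χ) ψ) :=
          𝒯.tens_mono (𝒯.le_Txi_e (EVr a) 𝔵 χ) h
      _ ≤ ψ.1 𝔵 := h1
  · intro h
    apply le_hatRel hhs
    intro 𝔷
    rw [𝒯.tens_unit]
    have hE : 𝒯.Txi (EVr a) 𝔷 (𝒯.e χ)
        = 𝒯.Txi (fun (𝔵 : T X) (_ : PUnit.{u + 1}) => χ.1 𝔵) 𝔷 (𝒯.e PUnit.unit) := by
      rw [← 𝒯.e_nat (fun _ : PUnit.{u + 1} => χ) PUnit.unit, 𝒯.Txi_map_right]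
      rfl
    rw [hE]
    exact le_trans (presheaf_cond2 χ 𝔷) (h _)

end PresheafInfra

section HatStr

variable {𝒯 : TopTheory V T} {X Y : Type u}

lemma raw_le_hatRel (a : 𝒯.TCatStr X) {w : V} {𝔭 : T (Hat a)} {ψ : Hat a}
    (h : ∀ 𝔷 : T (T X), 𝒯.tens (𝒯.Txi (EVr a) 𝔷 𝔭) w ≤ ψ.1 (𝒯.m 𝔷)) :
    w ≤ 𝒯.powRel X (𝒯.map Subtype.val 𝔭) ψ.1 := by
  rw [powRel_val_eq]
  exact le_iInf fun 𝔷 => 𝒯.le_ihom (h 𝔷)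

lemma Txi_EVr_e_le (a : 𝒯.TCatStr X) (ψ : Hat a) (𝔷 : T (T X)) :
    𝒯.Txi (EVr a) 𝔷 (𝒯.e ψ) ≤ ψ.1 (𝒯.m 𝔷) := by
  have hE : 𝒯.Txi (EVr a) 𝔷 (𝒯.e ψ)
      = 𝒯.Txi (fun (𝔵 : T X) (_ : PUnit.{u + 1}) => ψ.1 𝔵) 𝔷 (𝒯.e PUnit.unit) := by
    rw [← 𝒯.e_nat (fun _ : PUnit.{u + 1} => ψ) PUnit.unit, 𝒯.Txi_map_right]
    rfl
  rw [hE]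
  exact presheaf_cond2 ψ 𝔷

/-- The key composition step for evaluation relations. -/
lemma EVr_chain {C : Type u} (a : 𝒯.TCatStr X) (ρ : T (Hat a) → C → V) (τ : T X → C → V)
    (habs : ∀ (𝔷₀ : T (T X)) (𝔭₀ : T (Hat a)) (c : C),
      𝒯.tens (𝒯.Txi (EVr a) 𝔷₀ 𝔭₀) (ρ 𝔭₀ c) ≤ τ (𝒯.m 𝔷₀) c)
    (𝔷 : T (T X)) (𝔓 : T (T (Hat a))) (𝔠 : T C) :
    𝒯.tens (𝒯.Txi (EVr a) 𝔷 (𝒯.m 𝔓)) (𝒯.Txi ρ 𝔓 𝔠)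
      ≤ ⨆ 𝔷₂ : {𝔷₂ : T (T (T X)) // 𝒯.m 𝔷₂ = 𝔷}, 𝒯.Txi τ (𝒯.map 𝒯.m 𝔷₂.1) 𝔠 := by
  refine le_trans (𝒯.tens_mono (𝒯.Txi_m_le (EVr a) 𝔷 𝔓) le_rfl) ?_
  rw [iSup_tens]
  apply iSup_le
  rintro ⟨𝔷₂, h𝔷₂⟩
  refine le_iSup_of_le ⟨𝔷₂, h𝔷₂⟩ ?_
  refine le_trans (𝒯.tens_Txi_Txi_le (𝒯.Txi (EVr a)) ρ 𝔷₂ 𝔓 𝔠) ?_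
  refine le_trans (𝒯.Txi_mono' (fun 𝔷₀ c => iSup_le fun 𝔭₀ => habs 𝔷₀ 𝔭₀ c) 𝔷₂ 𝔠) ?_
  exact le_of_eq (𝒯.Txi_map_left τ 𝒯.m 𝔷₂ 𝔠).symm

set_option maxHeartbeats 1000000 in
/-- The canonical `𝒯`-category structure on `X̂`. -/
def hatStr (a : 𝒯.TCatStr X) : 𝒯.TCatStr (Hat a) where
  rel 𝔭 ψ := 𝒯.powRel X (𝒯.map Subtype.val 𝔭) ψ.1
  le_refl ψ := by
    apply raw_le_hatRel a
    intro 𝔷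
    rw [𝒯.tens_unit]
    exact Txi_EVr_e_le a ψ 𝔷
  comp 𝔭 ψ := by
    apply iSup_le; rintro ⟨𝔓, rfl⟩
    apply iSup_le; intro 𝔮
    apply raw_le_hatRel a
    intro 𝔷
    rw [← 𝒯.tens_assoc]
    refine le_trans (𝒯.tens_mono (EVr_chain a
      (fun 𝔭₀ ψ₀ => 𝒯.powRel X (𝒯.map Subtype.val 𝔭₀) ψ₀.1) (EVr a)
      (fun 𝔷₀ 𝔭₀ c => raw_hatRel_le a 𝔷₀ 𝔭₀ c) 𝔷 𝔓 𝔮) le_rfl) ?_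
    rw [iSup_tens]
    apply iSup_le; rintro ⟨𝔷₂, h𝔷₂⟩
    refine le_trans (raw_hatRel_le a (𝒯.map 𝒯.m 𝔷₂) 𝔮 ψ) ?_
    rw [← 𝒯.m_assoc, h𝔷₂]

lemma hatStr_is (a : 𝒯.TCatStr X) : IsHatStr a (hatStr a) := fun _ _ => rfl

/-- Presheaf `𝒯`-categories are L-separated. -/
lemma hat_separated {a : 𝒯.TCatStr X} {hs : 𝒯.TCatStr (Hat a)} (hhs : IsHatStr a hs) :
    Separated hs := by
  intro A as f g hf hg hfg
  funext v
  have h1 : 𝒯.unit ≤ hs.rel (𝒯.e (f v)) (g v) := (hfg (𝒯.e (f v)) v) ▸ hs.le_refl (f v)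
  have h2 : 𝒯.unit ≤ hs.rel (𝒯.e (g v)) (f v) := (hfg (𝒯.e (g v)) v).symm ▸ hs.le_refl (g v)
  apply Subtype.ext; funext 𝔵
  exact le_antisymm ((unit_le_hatRel_iff hhs _ _).1 h1 𝔵) ((unit_le_hatRel_iff hhs _ _).1 h2 𝔵)

/-- decomposition of `Txi` of a Kleisli-convolution-shaped relation. -/
lemma Txi_kleisli_le {B W C : Type u} (𝒯 : TopTheory V T) (s : T (T B) → W → V)
    (t : W → C → V) (𝔷 : T (T B)) (𝔠 : T C) :
    𝒯.Txi (fun (𝔶₀ : T B) (c : C) =>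
        ⨆ 𝔅₀ : {𝔅₀ : T (T B) // 𝒯.m 𝔅₀ = 𝔶₀}, ⨆ w : W, 𝒯.tens (s 𝔅₀.1 w) (t w c)) 𝔷 𝔠
      ≤ ⨆ 𝔅 : {𝔅 : T (T (T B)) // 𝒯.map 𝒯.m 𝔅 = 𝔷}, ⨆ 𝔚 : T W,
          𝒯.tens (𝒯.Txi s 𝔅.1 𝔚) (𝒯.Txi t 𝔚 𝔠) := by
  have hrel : (fun (𝔶₀ : T B) (c : C) =>
      ⨆ 𝔅₀ : {𝔅₀ : T (T B) // 𝒯.m 𝔅₀ = 𝔶₀}, ⨆ w : W, 𝒯.tens (s 𝔅₀.1 w) (t w c))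
      = 𝒯.vcomp (fun 𝔶₀ 𝔅₀ => ⨆ _ : 𝒯.m 𝔅₀ = 𝔶₀, 𝒯.unit) (𝒯.vcomp s t) := by
    funext 𝔶₀ c
    apply le_antisymm
    · apply iSup_le; rintro ⟨𝔅₀, h⟩
      apply iSup_le; intro w
      refine le_iSup_of_le 𝔅₀ ?_
      calc 𝒯.tens (s 𝔅₀ w) (t w c) ≤ 𝒯.vcomp s t 𝔅₀ c := le_iSup_of_le w le_rfl
        _ = 𝒯.tens 𝒯.unit (𝒯.vcomp s t 𝔅₀ c) := (𝒯.unit_tens _).symm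
        _ ≤ _ := 𝒯.tens_mono (le_iSup_of_le h le_rfl) le_rfl
    · apply iSup_le; intro 𝔅₀
      rw [𝒯.prop_tens]
      apply iSup_le; intro h
      exact le_iSup_of_le ⟨𝔅₀, h⟩ le_rfl
  rw [hrel]
  refine le_trans (𝒯.Txi_vcomp_le _ _ 𝔷 𝔠) ?_
  apply iSup_le; intro 𝔅
  rw [𝒯.Txi_cograph, 𝒯.prop_tens]
  apply iSup_le; intro h𝔅
  refine le_trans (𝒯.Txi_vcomp_le s t 𝔅 𝔠) ?_
  apply iSup_le; intro 𝔚
  exact le_iSup_of_le ⟨𝔅, h𝔅⟩ (le_iSup_of_le 𝔚 le_rfl)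

end HatStr

section HatMap

variable {𝒯 : TopTheory V T} {X Y : Type u}

lemma Txi_modCostar_eq (b : 𝒯.TCatStr Y) (f : X → Y) (𝔜 : T (T Y)) (𝔵' : T X) :
    𝒯.Txi (modCostar b f) 𝔜 𝔵' = 𝒯.Txi b.rel 𝔜 (𝒯.map f 𝔵') :=
  (𝒯.Txi_map_right b.rel f 𝔜 𝔵').symm

lemma unit_le_Txi_costar (b : 𝒯.TCatStr Y) (f : X → Y) (𝔵 : T X) :
    𝒯.unit ≤ 𝒯.Txi (modCostar b f) (𝒯.map 𝒯.e (𝒯.map f 𝔵)) 𝔵 := by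
  have h := 𝒯.unit_le_Txi (modCostar b f) (fun x => 𝒯.e (f x)) (fun x => x) 𝔵
    (fun x => b.le_refl (f x))
  rw [map_id'] at h
  rw [map_map]
  exact h

lemma le_hatMapRel_map (b : 𝒯.TCatStr Y) (f : X → Y) (ψ₀ : T X → V) (𝔵 : T X) :
    ψ₀ 𝔵 ≤ hatMapRel b f ψ₀ (𝒯.map f 𝔵) := by
  refine le_iSup_of_le ⟨𝒯.map 𝒯.e (𝒯.map f 𝔵), 𝒯.m_map_e _⟩ (le_iSup_of_le 𝔵 ?_)
  calc ψ₀ 𝔵 = 𝒯.tens 𝒯.unit (ψ₀ 𝔵) := (𝒯.unit_tens _).symm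
    _ ≤ _ := 𝒯.tens_mono (unit_le_Txi_costar b f 𝔵) le_rfl

lemma hatMapRel_counit (b : 𝒯.TCatStr Y) (f : X → Y) (φ : Hat b) (𝔶 : T Y) :
    hatMapRel b f (fun 𝔵 => φ.1 (𝒯.map f 𝔵)) 𝔶 ≤ φ.1 𝔶 := by
  apply iSup_le; rintro ⟨𝔜, rfl⟩
  apply iSup_le; intro 𝔵
  rw [Txi_modCostar_eq]
  exact presheaf_cond1 φ 𝔜 (𝒯.map f 𝔵)

lemma hatMapRel_yoneda {a : 𝒯.TCatStr X} {b : 𝒯.TCatStr Y} {f : X → Y}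
    (hf : IsTFunctor a b f) (x : X) (𝔶 : T Y) :
    hatMapRel b f (fun 𝔵 => a.rel 𝔵 x) 𝔶 = b.rel 𝔶 (f x) := by
  apply le_antisymm
  · apply iSup_le; rintro ⟨𝔜, rfl⟩
    apply iSup_le; intro 𝔵'
    rw [Txi_modCostar_eq]
    refine le_trans (𝒯.tens_mono le_rfl (hf 𝔵' x)) ?_
    refine le_trans ?_ (b.comp (𝒯.m 𝔜) (f x))
    exact le_iSup_of_le ⟨𝔜, rfl⟩ (le_iSup_of_le (𝒯.map f 𝔵') le_rfl)
  · refine le_iSup_of_le ⟨𝒯.e 𝔶, 𝒯.m_e 𝔶⟩ (le_iSup_of_le (𝒯.e x) ?_)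
    calc b.rel 𝔶 (f x) = 𝒯.tens (modCostar b f 𝔶 x) 𝒯.unit := (𝒯.tens_unit _).symm
      _ ≤ _ := 𝒯.tens_mono (𝒯.le_Txi_e (modCostar b f) 𝔶 x) (a.le_refl x)

/-- The Kleisli composition bound `T_ξ b · T_ξ f^* ≤ f^* · m`. -/
lemma vcomp_Txi_costar_le (b : 𝒯.TCatStr Y) (f : X → Y) (𝔅₀ : T (T Y)) (x₀ : X) :
    𝒯.vcomp (𝒯.Txi b.rel) (modCostar b f) 𝔅₀ x₀ ≤ modCostar b f (𝒯.m 𝔅₀) x₀ := by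
  apply iSup_le; intro 𝔶₀
  refine le_trans ?_ (b.comp (𝒯.m 𝔅₀) (f x₀))
  exact le_iSup_of_le ⟨𝔅₀, rfl⟩ (le_iSup_of_le 𝔶₀ le_rfl)

/-- `f̂ ψ` is a presheaf, given the second presheaf condition for the input. -/
lemma isPresheaf_hatMapRel (b : 𝒯.TCatStr Y) (f : X → Y) (F : T X → V)
    (c2 : ∀ 𝔚 : T (T X),
      𝒯.Txi (fun (𝔵₀ : T X) (_ : PUnit.{u + 1}) => F 𝔵₀) 𝔚 (𝒯.e PUnit.unit) ≤ F (𝒯.m 𝔚)) :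
    IsPresheaf b (hatMapRel b f F) := by
  apply isPresheaf_of
  · intro 𝔜₁ 𝔶'
    rw [show hatMapRel b f F 𝔶' = ⨆ 𝔜' : {𝔜' : T (T Y) // 𝒯.m 𝔜' = 𝔶'}, ⨆ 𝔵' : T X,
      𝒯.tens (𝒯.Txi (modCostar b f) 𝔜'.1 𝔵') (F 𝔵') from rfl, 𝒯.tens_iSup]
    apply iSup_le; rintro ⟨𝔜', rfl⟩
    rw [𝒯.tens_iSup]
    apply iSup_le; intro 𝔵'
    rw [← 𝒯.tens_assoc]
    have step1 : 𝒯.tens (𝒯.Txi b.rel 𝔜₁ (𝒯.m 𝔜')) (𝒯.Txi (modCostar b f) 𝔜' 𝔵')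
        ≤ ⨆ 𝔄 : {𝔄 : T (T (T Y)) // 𝒯.m 𝔄 = 𝔜₁},
          𝒯.Txi (modCostar b f) (𝒯.map 𝒯.m 𝔄.1) 𝔵' := by
      refine le_trans (𝒯.tens_mono (𝒯.Txi_m_le b.rel 𝔜₁ 𝔜') le_rfl) ?_
      rw [iSup_tens]
      apply iSup_le; rintro ⟨𝔄, h𝔄⟩
      refine le_iSup_of_le ⟨𝔄, h𝔄⟩ ?_
      refine le_trans (𝒯.tens_Txi_Txi_le (𝒯.Txi b.rel) (modCostar b f) 𝔄 𝔜' 𝔵') ?_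
      refine le_trans (𝒯.Txi_mono' (fun 𝔅₀ x₀ => vcomp_Txi_costar_le b f 𝔅₀ x₀) 𝔄 𝔵') ?_
      exact le_of_eq (𝒯.Txi_map_left (modCostar b f) 𝒯.m 𝔄 𝔵').symm
    refine le_trans (𝒯.tens_mono step1 le_rfl) ?_
    rw [iSup_tens]
    apply iSup_le; rintro ⟨𝔄, h𝔄⟩
    exact le_iSup_of_le (⟨𝒯.map 𝒯.m 𝔄, by rw [← 𝒯.m_assoc, h𝔄]⟩ :
      {𝔜₂ : T (T Y) // 𝒯.m 𝔜₂ = 𝒯.m 𝔜₁}) (le_iSup_of_le 𝔵' le_rfl)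
  · intro 𝔷
    refine le_trans (le_of_eq rfl) (le_trans (𝒯.Txi_kleisli_le
      (𝒯.Txi (modCostar b f)) (fun (𝔵₀ : T X) (_ : PUnit.{u + 1}) => F 𝔵₀) 𝔷
      (𝒯.e PUnit.unit)) ?_)
    apply iSup_le; rintro ⟨𝔅, h𝔅⟩
    apply iSup_le; intro 𝔚
    refine le_trans (𝒯.tens_mono (𝒯.Txi_Txi_le (modCostar b f) 𝔅 𝔚) (c2 𝔚)) ?_
    exact le_iSup_of_le (⟨𝒯.m 𝔅, by rw [𝒯.m_assoc, h𝔅]⟩ :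
      {𝔜' : T (T Y) // 𝒯.m 𝔜' = 𝒯.m 𝔷}) (le_iSup_of_le (𝒯.m 𝔚) le_rfl)

end HatMap

section HatMapFunctor

variable {𝒯 : TopTheory V T} {X Y : Type u}

lemma hatMap_functor {a : 𝒯.TCatStr X} {b : 𝒯.TCatStr Y} {hsa : 𝒯.TCatStr (Hat a)}
    {hsb : 𝒯.TCatStr (Hat b)} {f : X → Y} {fh : Hat a → Hat b}
    (hhsa : IsHatStr a hsa) (hhsb : IsHatStr b hsb)
    (hfh : IsHatMap a b f fh) : IsTFunctor hsa hsb fh := by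
  intro 𝔭 ψ
  apply le_hatRel hhsb
  intro 𝔷
  have hE : 𝒯.Txi (EVr b) 𝔷 (𝒯.map fh 𝔭)
      = 𝒯.Txi (fun (𝔶₀ : T Y) (ψ₀ : Hat a) =>
          ⨆ 𝔅₀ : {𝔅₀ : T (T Y) // 𝒯.m 𝔅₀ = 𝔶₀}, ⨆ w : T X,
            𝒯.tens (𝒯.Txi (modCostar b f) 𝔅₀.1 w) (EVr a w ψ₀)) 𝔷 𝔭 := by
    rw [𝒯.Txi_map_right]
    congr 1
    funext 𝔶₀ ψ₀
    exact hfh ψ₀ 𝔶₀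
  rw [hE, hfh ψ (𝒯.m 𝔷)]
  refine le_trans (𝒯.tens_mono (𝒯.Txi_kleisli_le (𝒯.Txi (modCostar b f)) (EVr a) 𝔷 𝔭)
    le_rfl) ?_
  rw [iSup_tens]
  apply iSup_le; rintro ⟨𝔅, h𝔅⟩
  rw [iSup_tens]
  apply iSup_le; intro 𝔚
  rw [𝒯.tens_assoc]
  refine le_trans (𝒯.tens_mono (𝒯.Txi_Txi_le (modCostar b f) 𝔅 𝔚)
    (hatRel_le hhsa 𝔚 𝔭 ψ)) ?_
  exact le_iSup_of_le (⟨𝒯.m 𝔅, by rw [𝒯.m_assoc, h𝔅]⟩ :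
    {𝔜 : T (T Y) // 𝒯.m 𝔜 = 𝒯.m 𝔷}) (le_iSup_of_le (𝒯.m 𝔚) le_rfl)

/-- The underlying function of `f⁻¹ : Ŷ → X̂`. -/
def invPre (b : 𝒯.TCatStr Y) (f : X → Y) (φ : Hat b) : T X → V :=
  fun 𝔵 => φ.1 (𝒯.map f 𝔵)

lemma isPresheaf_inv (a : 𝒯.TCatStr X) (b : 𝒯.TCatStr Y) (f : X → Y)
    (hf : IsTFunctor a b f) (φ : Hat b) : IsPresheaf a (invPre b f φ) := by
  apply isPresheaf_of
  · intro 𝔷 𝔵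
    have h1 : 𝒯.Txi a.rel 𝔷 𝔵 ≤ 𝒯.Txi b.rel (𝒯.map (𝒯.map f) 𝔷) (𝒯.map f 𝔵) := by
      refine le_trans (𝒯.Txi_mono' (fun 𝔷₀ x₀ => hf 𝔷₀ x₀) 𝔷 𝔵) ?_
      exact 𝒯.Txi_comp_le b.rel (𝒯.map f) f 𝔷 𝔵
    refine le_trans (𝒯.tens_mono h1 le_rfl) ?_
    refine le_trans (presheaf_cond1 φ (𝒯.map (𝒯.map f) 𝔷) (𝒯.map f 𝔵)) (le_of_eq ?_)
    rw [← 𝒯.m_nat]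
    rfl
  · intro 𝔷
    have h1 : 𝒯.Txi (fun (𝔵₀ : T X) (_ : PUnit.{u + 1}) => invPre b f φ 𝔵₀) 𝔷 (𝒯.e PUnit.unit)
        = 𝒯.Txi (fun (𝔶₀ : T Y) (_ : PUnit.{u + 1}) => φ.1 𝔶₀)
            (𝒯.map (𝒯.map f) 𝔷) (𝒯.e PUnit.unit) :=
      (𝒯.Txi_map_left (fun (𝔶₀ : T Y) (_ : PUnit.{u + 1}) => φ.1 𝔶₀)
        (𝒯.map f) 𝔷 (𝒯.e PUnit.unit)).symm
    rw [h1]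
    refine le_trans (presheaf_cond2 φ (𝒯.map (𝒯.map f) 𝔷)) (le_of_eq ?_)
    show φ.1 (𝒯.m (𝒯.map (𝒯.map f) 𝔷)) = invPre b f φ (𝒯.m 𝔷)
    rw [invPre, ← 𝒯.m_nat]

/-- `f⁻¹ : Ŷ → X̂`. -/
def invMap (a : 𝒯.TCatStr X) (b : 𝒯.TCatStr Y) (f : X → Y) (hf : IsTFunctor a b f) :
    Hat b → Hat a := fun φ => ⟨invPre b f φ, isPresheaf_inv a b f hf φ⟩

lemma invMap_functor {a : 𝒯.TCatStr X} {b : 𝒯.TCatStr Y} {hsa : 𝒯.TCatStr (Hat a)}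
    {hsb : 𝒯.TCatStr (Hat b)} {f : X → Y}
    (hhsa : IsHatStr a hsa) (hhsb : IsHatStr b hsb) (hf : IsTFunctor a b f) :
    IsTFunctor hsb hsa (invMap a b f hf) := by
  intro 𝔮 φ
  apply le_hatRel hhsa
  intro 𝔷
  have hE : 𝒯.Txi (EVr a) 𝔷 (𝒯.map (invMap a b f hf) 𝔮)
      = 𝒯.Txi (EVr b) (𝒯.map (𝒯.map f) 𝔷) 𝔮 := by
    rw [𝒯.Txi_map_right, 𝒯.Txi_map_left]
    rfl
  rw [hE]
  refine le_trans (hatRel_le hhsb (𝒯.map (𝒯.map f) 𝔷) 𝔮 φ) (le_of_eq ?_)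
  show φ.1 (𝒯.m (𝒯.map (𝒯.map f) 𝔷)) = invPre b f φ (𝒯.m 𝔷)
  rw [invPre, ← 𝒯.m_nat]

lemma hatMap_leftAdjoint {a : 𝒯.TCatStr X} {b : 𝒯.TCatStr Y} {hsa : 𝒯.TCatStr (Hat a)}
    {hsb : 𝒯.TCatStr (Hat b)} {f : X → Y} {fh : Hat a → Hat b}
    (hhsa : IsHatStr a hsa) (hhsb : IsHatStr b hsb) (hf : IsTFunctor a b f)
    (hfh : IsHatMap a b f fh) : IsLeftAdjoint hsa hsb fh := by
  refine ⟨hatMap_functor hhsa hhsb hfh, invMap a b f hf,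
    invMap_functor hhsa hhsb hf, ?_, ?_⟩
  · intro 𝔭 ψ
    refine hatRel_mono hhsa fun 𝔵 => ?_
    show ψ.1 𝔵 ≤ (fh ψ).1 (𝒯.map f 𝔵)
    rw [hfh ψ (𝒯.map f 𝔵)]
    exact le_hatMapRel_map b f ψ.1 𝔵
  · intro 𝔮 φ
    refine hatRel_mono hhsb fun 𝔶 => ?_
    show (fh (invMap a b f hf φ)).1 𝔶 ≤ φ.1 𝔶
    rw [hfh _ 𝔶]
    exact hatMapRel_counit b f φ 𝔶

lemma hatMap_yoneda_comm {a : 𝒯.TCatStr X} {b : 𝒯.TCatStr Y}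
    {ya : X → Hat a} {yb : Y → Hat b} {f : X → Y} {fh : Hat a → Hat b}
    (hya : IsYoneda a ya) (hyb : IsYoneda b yb) (hf : IsTFunctor a b f)
    (hfh : IsHatMap a b f fh) : fh ∘ ya = yb ∘ f := by
  funext x
  apply Subtype.ext
  funext 𝔶
  show (fh (ya x)).1 𝔶 = (yb (f x)).1 𝔶
  rw [hfh _ 𝔶, hyb (f x) 𝔶]
  have hrep : (ya x).1 = fun 𝔵 => a.rel 𝔵 x := funext fun 𝔵 => hya x 𝔵
  rw [hrep]
  exact hatMapRel_yoneda hf x 𝔶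

lemma hatMap_le {a : 𝒯.TCatStr X} {b : 𝒯.TCatStr Y} {hsb : 𝒯.TCatStr (Hat b)}
    {f g : X → Y} {fh gh : Hat a → Hat b}
    (hhsb : IsHatStr b hsb) (hfh : IsHatMap a b f fh) (hgh : IsHatMap a b g gh)
    (hle : funLE b f g) : funLE hsb fh gh := by
  intro 𝔭 ψ
  refine hatRel_mono hhsb fun 𝔶 => ?_
  rw [hfh ψ 𝔶, hgh ψ 𝔶]
  apply iSup_le; rintro ⟨𝔜, rfl⟩
  apply iSup_le; intro 𝔵
  refine le_trans (𝒯.tens_mono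
    (𝒯.Txi_mono' (fun 𝔶₀ x₀ => hle 𝔶₀ x₀) 𝔜 𝔵) le_rfl) ?_
  exact le_iSup_of_le ⟨𝔜, rfl⟩ (le_iSup_of_le 𝔵 le_rfl)

end HatMapFunctor

section Adjunctions

variable {𝒯 : TopTheory V T} {X Y : Type u}

/-- For an adjunction `f ⊣ g` of `𝒯`-functors, `f_* = g^*`. -/
lemma adj_module {a : 𝒯.TCatStr X} {b : 𝒯.TCatStr Y} {f : X → Y} {g : Y → X}
    (hf : IsTFunctor a b f) (hg : IsTFunctor b a g) (hadj : IsAdjunction a b f g)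
    (𝔵 : T X) (y : Y) : b.rel (𝒯.map f 𝔵) y = a.rel 𝔵 (g y) := by
  apply le_antisymm
  · have h1 : b.rel (𝒯.map f 𝔵) y ≤ a.rel (𝒯.map g (𝒯.map f 𝔵)) (g y) := hg _ _
    have h2 := star_transport (a := a) (f := fun x => g (f x)) (g := fun x => x)
      (fun v => le_trans (a.le_refl v) (hadj.1 (𝒯.e v) v)) 𝔵 (g y)
    rw [map_id'] at h2
    rw [map_map] at h1
    exact le_trans h1 h2
  · exact le_trans (hf 𝔵 (g y)) (hadj.2 (𝒯.map f 𝔵) y)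

/-- `φ ≤ y (Sup φ)`: the presheaf-level adjunction unit. -/
lemma sup_unit {a : 𝒯.TCatStr X} {hs : 𝒯.TCatStr (Hat a)} {y : X → Hat a} {Sup : Hat a → X}
    (hhs : IsHatStr a hs) (hy : IsYoneda a y) (hS : IsTFunctor hs a Sup)
    (hSy : ∀ x, Sup (y x) = x) (φ : Hat a) (𝔶 : T X) : φ.1 𝔶 ≤ a.rel 𝔶 (Sup φ) := by
  calc φ.1 𝔶 = hs.rel (𝒯.map y 𝔶) φ := (yoneda_eval hhs hy 𝔶 φ).symm
    _ ≤ a.rel (𝒯.map Sup (𝒯.map y 𝔶)) (Sup φ) := hS _ _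
    _ = a.rel 𝔶 (Sup φ) := by
        rw [map_map, show (fun x => Sup (y x)) = fun x : X => x from funext hSy, map_id']

lemma sup_mono {a : 𝒯.TCatStr X} {hs : 𝒯.TCatStr (Hat a)} {y : X → Hat a} {Sup : Hat a → X}
    (hhs : IsHatStr a hs) (hy : IsYoneda a y) (hS : IsTFunctor hs a Sup)
    (hadj : IsAdjunction hs a Sup y) (hSy : ∀ x, Sup (y x) = x)
    (χ₁ χ₂ : Hat a) (h : ∀ 𝔵, χ₁.1 𝔵 ≤ χ₂.1 𝔵) :
    𝒯.unit ≤ a.rel (𝒯.e (Sup χ₁)) (Sup χ₂) := by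
  rw [← 𝒯.e_nat Sup χ₁, adj_module hS (yoneda_functor hhs hy) hadj (𝒯.e χ₁) (Sup χ₂)]
  refine (unit_le_hatRel_iff hhs _ _).2 fun 𝔵 => ?_
  rw [hy (Sup χ₂) 𝔵]
  exact le_trans (h 𝔵) (sup_unit hhs hy hS hSy χ₂ 𝔵)

end Adjunctions

section KZ

variable {𝒯 : TopTheory V T} {X : Type u}

/-- `ŷ ψ ≤ y' ψ` pointwise: the Kock–Zöberlein inequality at the level of presheaves. -/
lemma hatMapRel_yon_le {a : 𝒯.TCatStr X} {hs : 𝒯.TCatStr (Hat a)} {y : X → Hat a}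
    (hhs : IsHatStr a hs) (hy : IsYoneda a y) (ψ : Hat a) (𝔭 : T (Hat a)) :
    hatMapRel hs y ψ.1 𝔭 ≤ hs.rel 𝔭 ψ := by
  apply iSup_le; rintro ⟨𝔓, rfl⟩
  apply iSup_le; intro 𝔵'
  apply le_hatRel hhs
  intro 𝔷
  rw [← 𝒯.tens_assoc]
  have habs : ∀ (𝔷₀ : T (T X)) (𝔭₀ : T (Hat a)) (x₀ : X),
      𝒯.tens (𝒯.Txi (EVr a) 𝔷₀ 𝔭₀) (modCostar hs y 𝔭₀ x₀) ≤ a.rel (𝒯.m 𝔷₀) x₀ :=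
    fun 𝔷₀ 𝔭₀ x₀ =>
      le_trans (hatRel_le hhs 𝔷₀ 𝔭₀ (y x₀)) (le_of_eq (hy x₀ (𝒯.m 𝔷₀)))
  refine le_trans (𝒯.tens_mono (EVr_chain a (modCostar hs y) a.rel habs 𝔷 𝔓 𝔵')
    le_rfl) ?_
  rw [iSup_tens]
  apply iSup_le; rintro ⟨𝔷₂, h𝔷₂⟩
  refine le_trans (presheaf_cond1 ψ (𝒯.map 𝒯.m 𝔷₂) 𝔵') (le_of_eq ?_)
  rw [← 𝒯.m_assoc, h𝔷₂]

lemma kz_funLE {a : 𝒯.TCatStr X} {hs : 𝒯.TCatStr (Hat a)} {hs2 : 𝒯.TCatStr (Hat hs)}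
    {y : X → Hat a} {y' : Hat a → Hat hs} {yh : Hat a → Hat hs}
    (hhs : IsHatStr a hs) (hhs2 : IsHatStr hs hs2) (hy : IsYoneda a y)
    (hy' : IsYoneda hs y') (hyh : IsHatMap a hs y yh) : funLE hs2 yh y' := by
  intro 𝔓 ψ
  refine hatRel_mono hhs2 fun 𝔭 => ?_
  rw [hyh ψ 𝔭, hy' ψ 𝔭]
  exact hatMapRel_yon_le hhs hy ψ 𝔭

lemma hatMapRel_yon_map (a : 𝒯.TCatStr X) {hs : 𝒯.TCatStr (Hat a)} {y : X → Hat a}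
    (hhs : IsHatStr a hs) (hy : IsYoneda a y) (ψ : Hat a) (𝔵 : T X) :
    hatMapRel hs y ψ.1 (𝒯.map y 𝔵) = ψ.1 𝔵 := by
  apply le_antisymm
  · exact le_trans (hatMapRel_yon_le hhs hy ψ (𝒯.map y 𝔵))
      (le_of_eq (yoneda_eval hhs hy 𝔵 ψ))
  · exact le_hatMapRel_map hs y ψ.1 𝔵

end KZ

section SupCocomplete

variable {𝒯 : TopTheory V T} {X : Type u}

/-- The evaluation module `X ⇸∘ X̂`. -/
lemma EVr_isModule {a : 𝒯.TCatStr X} {hs : 𝒯.TCatStr (Hat a)} (hhs : IsHatStr a hs) :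
    𝒯.IsTModRel a.rel hs.rel (EVr a) := by
  constructor
  · intro 𝔵 φ
    apply iSup_le; rintro ⟨𝔛, rfl⟩
    apply iSup_le; intro 𝔵'
    exact presheaf_cond1 φ 𝔛 𝔵'
  · intro 𝔵 φ
    apply iSup_le; rintro ⟨𝔛, rfl⟩
    apply iSup_le; intro 𝔭
    exact hatRel_le hhs 𝔛 𝔭 φ

/-- From cocompleteness to an Eilenberg–Moore structure `Sup ⊣ y`. -/
lemma cocomplete_sup {a : 𝒯.TCatStr X} {hs : 𝒯.TCatStr (Hat a)} {y : X → Hat a}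
    (hhs : IsHatStr a hs) (hy : IsYoneda a y) (sep : Separated a) (coc : Cocomplete a) :
    ∃ Sup : Hat a → X, IsTFunctor hs a Sup ∧ Sup ∘ y = id ∧ IsAdjunction hs a Sup y := by
  obtain ⟨g, hg, hcolim⟩ := coc X (Hat a) a hs id (isTFunctor_id a) (EVr a) (EVr_isModule hhs)
  -- the key module identity `g_* = y^*`
  have hkey : ∀ (𝔭 : T (Hat a)) (x : X), a.rel (𝒯.map g 𝔭) x = hs.rel 𝔭 (y x) := by
    intro 𝔭 x
    rw [show a.rel (𝒯.map g 𝔭) x = modStar a g 𝔭 x from rfl, hcolim 𝔭 x,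
      hatRel_eq hhs 𝔭 (y x)]
    apply le_antisymm
    · apply le_iInf; intro 𝔷
      refine le_trans (iInf_le _ (𝒯.m 𝔷)) ?_
      have h1 : 𝒯.Txi (EVr a) 𝔷 𝔭
          ≤ ⨆ 𝔛 : {𝔛 : T (T X) // 𝒯.m 𝔛 = 𝒯.m 𝔷}, 𝒯.Txi (EVr a) 𝔛.1 𝔭 :=
        le_iSup_of_le ⟨𝔷, rfl⟩ le_rfl
      refine le_trans (𝒯.ihom_anti h1) (𝒯.ihom_mono (le_of_eq ?_))
      rw [show modStar a id (𝒯.m 𝔷) x = a.rel (𝒯.map id (𝒯.m 𝔷)) x from rfl,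
        show 𝒯.map id (𝒯.m 𝔷) = 𝒯.m 𝔷 from congrFun 𝒯.map_id _, hy x (𝒯.m 𝔷)]
    · apply le_iInf; intro 𝔵
      rw [𝒯.ihom_iSup_left]
      apply le_iInf; rintro ⟨𝔛, h𝔛⟩
      refine le_trans (iInf_le _ 𝔛) (𝒯.ihom_mono (le_of_eq ?_))
      rw [hy x (𝒯.m 𝔛), h𝔛,
        show modStar a id 𝔵 x = a.rel (𝒯.map id 𝔵) x from rfl,
        show 𝒯.map id 𝔵 = 𝔵 from congrFun 𝒯.map_id _]
  -- `g ∘ y = id`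
  have hgy : ∀ x x', a.rel (𝒯.e (g (y x))) x' = a.rel (𝒯.e x) x' := by
    intro x x'
    have h1 := hkey (𝒯.e (y x)) x'
    rw [𝒯.e_nat g (y x)] at h1
    rw [h1, ← 𝒯.e_nat y x, yoneda_eval hhs hy, hy x' (𝒯.e x)]
  have hfe : ∀ (𝔶 : T X) (x : X), a.rel 𝔶 (g (y x)) = a.rel 𝔶 x := by
    intro 𝔶 x
    have h1 : 𝒯.unit ≤ a.rel (𝒯.e (g (y x))) x := by
      rw [hgy x x]; exact a.le_refl x
    have h2 : 𝒯.unit ≤ a.rel (𝒯.e x) (g (y x)) := by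
      rw [← hgy x (g (y x))]; exact a.le_refl _
    exact le_antisymm (whisker a h1 𝔶) (whisker a h2 𝔶)
  have hcompid : (fun x => g (y x)) = fun x : X => x := by
    have := sep X a (fun x => g (y x)) id
      (IsTFunctor.comp (yoneda_functor hhs hy) hg) (isTFunctor_id a)
      (fun 𝔶 x => hfe 𝔶 x)
    exact this
  have hSy : ∀ x, g (y x) = x := fun x => congrFun hcompid x
  refine ⟨g, hg, funext hSy, ?_, ?_⟩
  · intro 𝔭 φ
    refine hatRel_mono hhs fun 𝔶₀ => ?_
    rw [hy (g φ) 𝔶₀]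
    exact sup_unit hhs hy hg hSy φ 𝔶₀
  · intro 𝔵 x
    exact le_of_eq (hfe 𝔵 x)

/-- From an Eilenberg–Moore structure to cocompleteness. -/
lemma sup_to_cocomplete {a : 𝒯.TCatStr X} {hs : 𝒯.TCatStr (Hat a)} {y : X → Hat a}
    {Sup : Hat a → X} (hhs : IsHatStr a hs) (hy : IsYoneda a y)
    (hS : IsTFunctor hs a Sup) (hadj : IsAdjunction hs a Sup y)
    (hSy : ∀ x, Sup (y x) = x) : Cocomplete a := by
  intro A Z as cs h hfunc ψ hmod
  -- the colimit presheaf family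
  have hc2 : ∀ (z : Z) (𝔚 : T (T A)),
      𝒯.Txi (fun (𝔞₀ : T A) (_ : PUnit.{u + 1}) => ψ 𝔞₀ z) 𝔚 (𝒯.e PUnit.unit)
        ≤ ψ (𝒯.m 𝔚) z := by
    intro z 𝔚
    rw [𝒯.Txi_punit_const ψ z 𝔚]
    refine le_trans ?_ (hmod.2 (𝒯.m 𝔚) z)
    refine le_iSup_of_le ⟨𝔚, rfl⟩ (le_iSup_of_le (𝒯.e z) ?_)
    calc 𝒯.Txi ψ 𝔚 (𝒯.e z) = 𝒯.tens (𝒯.Txi ψ 𝔚 (𝒯.e z)) 𝒯.unit := (𝒯.tens_unit _).symm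
      _ ≤ _ := 𝒯.tens_mono le_rfl (cs.le_refl z)
  let G : Z → Hat a := fun z => ⟨hatMapRel a h (fun 𝔞 => ψ 𝔞 z),
    isPresheaf_hatMapRel a h _ (hc2 z)⟩
  -- `Txi` of the colimit-presheaf family decomposes
  have hTP : ∀ (𝔴 : T (T X)) (𝔷 : T Z), 𝒯.Txi (EVr a) 𝔴 (𝒯.map G 𝔷)
      = 𝒯.Txi (fun (𝔵₀ : T X) (z₀ : Z) =>
          ⨆ 𝔛₀ : {𝔛₀ : T (T X) // 𝒯.m 𝔛₀ = 𝔵₀}, ⨆ 𝔞₀ : T A,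
            𝒯.tens (𝒯.Txi (modCostar a h) 𝔛₀.1 𝔞₀) (ψ 𝔞₀ z₀)) 𝔴 𝔷 := by
    intro 𝔴 𝔷
    rw [𝒯.Txi_map_right]
    rfl
  have hTPle : ∀ (𝔴 : T (T X)) (𝔷 : T Z), 𝒯.Txi (EVr a) 𝔴 (𝒯.map G 𝔷)
      ≤ ⨆ 𝔅 : {𝔅 : T (T (T X)) // 𝒯.map 𝒯.m 𝔅 = 𝔴}, ⨆ 𝔄 : T (T A),
          𝒯.tens (𝒯.Txi (modCostar a h) (𝒯.m 𝔅.1) (𝒯.m 𝔄)) (𝒯.Txi ψ 𝔄 𝔷) := by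
    intro 𝔴 𝔷
    rw [hTP]
    refine le_trans (𝒯.Txi_kleisli_le (𝒯.Txi (modCostar a h)) ψ 𝔴 𝔷) ?_
    apply iSup_le; rintro ⟨𝔅, h𝔅⟩
    apply iSup_le; intro 𝔄
    refine le_iSup_of_le ⟨𝔅, h𝔅⟩ (le_iSup_of_le 𝔄 ?_)
    exact 𝒯.tens_mono (𝒯.Txi_Txi_le (modCostar a h) 𝔅 𝔄) le_rfl
  -- `G` is a `𝒯`-functor
  have hG : IsTFunctor cs hs G := by
    intro 𝔷 z
    apply le_hatRel hhs
    intro 𝔴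
    refine le_trans (𝒯.tens_mono (hTPle 𝔴 𝔷) le_rfl) ?_
    rw [iSup_tens]
    apply iSup_le; rintro ⟨𝔅, h𝔅⟩
    rw [iSup_tens]
    apply iSup_le; intro 𝔄
    rw [𝒯.tens_assoc]
    have h2 : 𝒯.tens (𝒯.Txi ψ 𝔄 𝔷) (cs.rel 𝔷 z) ≤ ψ (𝒯.m 𝔄) z := by
      refine le_trans ?_ (hmod.2 (𝒯.m 𝔄) z)
      exact le_iSup_of_le ⟨𝔄, rfl⟩ (le_iSup_of_le 𝔷 le_rfl)
    refine le_trans (𝒯.tens_mono le_rfl h2) ?_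
    show _ ≤ (G z).1 (𝒯.m 𝔴)
    refine le_trans ?_ (le_of_eq rfl)
    exact le_iSup_of_le (⟨𝒯.m 𝔅, by rw [𝒯.m_assoc, h𝔅]⟩ :
      {𝔛₀ : T (T X) // 𝒯.m 𝔛₀ = 𝒯.m 𝔴}) (le_iSup_of_le (𝒯.m 𝔄) le_rfl)
  refine ⟨fun z => Sup (G z), IsTFunctor.comp hG hS, ?_⟩
  -- the colimit formula
  intro 𝔷 x
  have hmapg : 𝒯.map (fun z => Sup (G z)) 𝔷 = 𝒯.map Sup (𝒯.map G 𝔷) := by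
    rw [map_map]
  show a.rel (𝒯.map (fun z => Sup (G z)) 𝔷) x = _
  rw [hmapg, adj_module hS (yoneda_functor hhs hy) hadj (𝒯.map G 𝔷) x,
    hatRel_eq hhs]
  apply le_antisymm
  · apply le_iInf; intro 𝔞
    rw [𝒯.ihom_iSup_left]
    apply le_iInf; rintro ⟨𝔄, h𝔄⟩
    refine le_trans (iInf_le _ (𝒯.map (𝒯.map h) 𝔄)) ?_
    have he : (y x).1 (𝒯.m (𝒯.map (𝒯.map h) 𝔄)) = modStar a h 𝔞 x := by
      rw [hy x, ← 𝒯.m_nat, h𝔄]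
      rfl
    rw [he]
    apply 𝒯.ihom_anti
    rw [hTP]
    have hpt : ∀ (𝔞₀ : T A) (z₀ : Z), ψ 𝔞₀ z₀ ≤
        (fun (𝔵₀ : T X) (z₀ : Z) =>
          ⨆ 𝔛₀ : {𝔛₀ : T (T X) // 𝒯.m 𝔛₀ = 𝔵₀}, ⨆ 𝔞₁ : T A,
            𝒯.tens (𝒯.Txi (modCostar a h) 𝔛₀.1 𝔞₁) (ψ 𝔞₁ z₀)) (𝒯.map h 𝔞₀) z₀ :=
      fun 𝔞₀ z₀ => le_hatMapRel_map a h (fun 𝔞 => ψ 𝔞 z₀) 𝔞₀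
    refine le_trans (𝒯.Txi_mono' hpt 𝔄 𝔷) (le_of_eq ?_)
    exact (𝒯.Txi_map_left (fun (𝔵₀ : T X) (z₀ : Z) =>
      ⨆ 𝔛₀ : {𝔛₀ : T (T X) // 𝒯.m 𝔛₀ = 𝔵₀}, ⨆ 𝔞₁ : T A,
        𝒯.tens (𝒯.Txi (modCostar a h) 𝔛₀.1 𝔞₁) (ψ 𝔞₁ z₀)) (𝒯.map h) 𝔄 𝔷).symm
  · apply le_iInf; intro 𝔴
    apply 𝒯.le_ihom
    rw [hy x (𝒯.m 𝔴)]
    refine le_trans (𝒯.tens_mono (hTPle 𝔴 𝔷) le_rfl) ?_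
    rw [iSup_tens]
    apply iSup_le; rintro ⟨𝔅, h𝔅⟩
    rw [iSup_tens]
    apply iSup_le; intro 𝔄
    rw [𝒯.tens_assoc]
    have h2 : 𝒯.tens (𝒯.Txi ψ 𝔄 𝔷) (𝒯.extend (modStar a h) ψ 𝔷 x)
        ≤ a.rel (𝒯.map h (𝒯.m 𝔄)) x :=
      calc 𝒯.tens (𝒯.Txi ψ 𝔄 𝔷) (𝒯.extend (modStar a h) ψ 𝔷 x)
          ≤ 𝒯.tens (⨆ 𝔄' : {𝔄' : T (T A) // 𝒯.m 𝔄' = 𝒯.m 𝔄}, 𝒯.Txi ψ 𝔄'.1 𝔷)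
            (𝒯.ihom (⨆ 𝔄' : {𝔄' : T (T A) // 𝒯.m 𝔄' = 𝒯.m 𝔄}, 𝒯.Txi ψ 𝔄'.1 𝔷)
              (a.rel (𝒯.map h (𝒯.m 𝔄)) x)) :=
            𝒯.tens_mono (le_iSup_of_le ⟨𝔄, rfl⟩ le_rfl) (iInf_le _ (𝒯.m 𝔄))
        _ ≤ a.rel (𝒯.map h (𝒯.m 𝔄)) x := 𝒯.tens_ihom_le _ _
    refine le_trans (𝒯.tens_mono le_rfl h2) ?_
    rw [Txi_modCostar_eq]
    have heq : a.rel (𝒯.m (𝒯.m 𝔅)) x = a.rel (𝒯.m 𝔴) x := by rw [𝒯.m_assoc, h𝔅]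
    refine le_trans ?_ (le_of_eq heq)
    refine le_trans ?_ (a.comp (𝒯.m (𝒯.m 𝔅)) x)
    exact le_iSup_of_le ⟨𝒯.m 𝔅, rfl⟩ (le_iSup_of_le (𝒯.map h (𝒯.m 𝔄)) le_rfl)

end SupCocomplete

section ColimitLemmas

variable {𝒯 : TopTheory V T} {X Y A Z : Type u}

/-- The canonical cocone inequality of a weighted colimit. -/
lemma colimit_cocone {b : 𝒯.TCatStr X} {h : A → X} {ψ : T A → Z → V} {g : Z → X}
    (hcol : IsColimit b h ψ g) (𝔞 : T A) (z : Z) :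
    ψ 𝔞 z ≤ b.rel (𝒯.map h 𝔞) (g z) := by
  have h1 : 𝒯.unit ≤ 𝒯.extend (modStar b h) ψ (𝒯.e z) (g z) := by
    rw [← hcol (𝒯.e z) (g z)]
    show 𝒯.unit ≤ b.rel (𝒯.map g (𝒯.e z)) (g z)
    rw [𝒯.e_nat]
    exact b.le_refl (g z)
  have h2 : 𝒯.tens (⨆ 𝔄 : {𝔄 : T (T A) // 𝒯.m 𝔄 = 𝔞}, 𝒯.Txi ψ 𝔄.1 (𝒯.e z)) 𝒯.unit
      ≤ modStar b h 𝔞 (g z) :=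
    le_trans (𝒯.tens_mono le_rfl (le_trans h1 (iInf_le _ 𝔞))) (𝒯.tens_ihom_le _ _)
  calc ψ 𝔞 z ≤ 𝒯.Txi ψ (𝒯.e 𝔞) (𝒯.e z) := 𝒯.le_Txi_e ψ 𝔞 z
    _ ≤ ⨆ 𝔄 : {𝔄 : T (T A) // 𝒯.m 𝔄 = 𝔞}, 𝒯.Txi ψ 𝔄.1 (𝒯.e z) :=
        le_iSup_of_le ⟨𝒯.e 𝔞, 𝒯.m_e 𝔞⟩ le_rfl
    _ = 𝒯.tens (⨆ 𝔄 : {𝔄 : T (T A) // 𝒯.m 𝔄 = 𝔞}, 𝒯.Txi ψ 𝔄.1 (𝒯.e z)) 𝒯.unit :=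
        (𝒯.tens_unit _).symm
    _ ≤ modStar b h 𝔞 (g z) := h2

/-- Left adjoint `𝒯`-functors preserve weighted colimits. -/
lemma leftAdjoint_cocont {a : 𝒯.TCatStr X} {b : 𝒯.TCatStr Y} {f : X → Y} {r : Y → X}
    (hf : IsTFunctor a b f) (hr : IsTFunctor b a r) (hadj : IsAdjunction a b f r)
    {h : A → X} {ψ : T A → Z → V} {g : Z → X}
    (hcol : IsColimit a h ψ g) : IsColimit b (f ∘ h) ψ (f ∘ g) := by
  intro 𝔷 x'
  show b.rel (𝒯.map (f ∘ g) 𝔷) x' = _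
  rw [𝒯.map_comp f g 𝔷, adj_module hf hr hadj (𝒯.map g 𝔷) x',
    show a.rel (𝒯.map g 𝔷) (r x') = 𝒯.extend (modStar a h) ψ 𝔷 (r x') from hcol 𝔷 (r x')]
  apply iInf_congr; intro 𝔞
  congr 1
  show a.rel (𝒯.map h 𝔞) (r x') = b.rel (𝒯.map (f ∘ h) 𝔞) x'
  rw [← adj_module hf hr hadj (𝒯.map h 𝔞) x', ← 𝒯.map_comp f h 𝔞]

/-- Uniqueness of weighted colimits in a separated `𝒯`-category. -/
lemma colimit_unique {b : 𝒯.TCatStr X} (sep : Separated b) {cs : 𝒯.TCatStr Z}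
    {h : A → X} {ψ : T A → Z → V} {g g' : Z → X}
    (hgf : IsTFunctor cs b g) (hgf' : IsTFunctor cs b g')
    (hcol : IsColimit b h ψ g) (hcol' : IsColimit b h ψ g') : g = g' := by
  apply sep Z cs g g' hgf hgf'
  intro 𝔶 z
  have key : ∀ w : X, b.rel (𝒯.e (g z)) w = b.rel (𝒯.e (g' z)) w := by
    intro w
    have e1 := hcol (𝒯.e z) w
    have e2 := hcol' (𝒯.e z) w
    rw [show modStar b g (𝒯.e z) w = b.rel (𝒯.map g (𝒯.e z)) w from rfl, 𝒯.e_nat] at e1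
    rw [show modStar b g' (𝒯.e z) w = b.rel (𝒯.map g' (𝒯.e z)) w from rfl, 𝒯.e_nat] at e2
    rw [e1, e2]
  have h1 : 𝒯.unit ≤ b.rel (𝒯.e (g z)) (g' z) := by
    rw [key (g' z)]; exact b.le_refl (g' z)
  have h2 : 𝒯.unit ≤ b.rel (𝒯.e (g' z)) (g z) := by
    rw [← key (g z)]; exact b.le_refl (g z)
  exact le_antisymm (whisker b h1 𝔶) (whisker b h2 𝔶)

end ColimitLemmas

section Part6

variable {𝒯 : TopTheory V T} {X Y : Type u}

/-- homomorphism direction: a left adjoint `f` commutes with `Sup`s. -/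
lemma leftAdjoint_sup_comm {a : 𝒯.TCatStr X} {b : 𝒯.TCatStr Y}
    {hsa : 𝒯.TCatStr (Hat a)} {hsb : 𝒯.TCatStr (Hat b)}
    {ya : X → Hat a} {yb : Y → Hat b} {SupX : Hat a → X} {SupY : Hat b → Y}
    {f : X → Y} {fh : Hat a → Hat b}
    (sepb : Separated b)
    (hhsa : IsHatStr a hsa) (hhsb : IsHatStr b hsb)
    (hya : IsYoneda a ya) (hyb : IsYoneda b yb)
    (hSX : IsTFunctor hsa a SupX) (hadjX : IsAdjunction hsa a SupX ya)
    (hSyX : ∀ x, SupX (ya x) = x)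
    (hSY : IsTFunctor hsb b SupY) (hadjY : IsAdjunction hsb b SupY yb)
    (hSyY : ∀ y', SupY (yb y') = y')
    (hf : IsTFunctor a b f) (hfh : IsHatMap a b f fh)
    (hla : IsLeftAdjoint a b f) : f ∘ SupX = SupY ∘ fh := by
  obtain ⟨-, r, hr, hadjf⟩ := hla
  have hfhle : ∀ (φ : Hat a) (𝔶₀ : T Y) (t : Y),
      (∀ 𝔵₀ : T X, φ.1 𝔵₀ ≤ b.rel (𝒯.map f 𝔵₀) t) → (fh φ).1 𝔶₀ ≤ b.rel 𝔶₀ t := by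
    intro φ 𝔶₀ t hpt
    rw [hfh φ 𝔶₀]
    apply iSup_le; rintro ⟨𝔜, rfl⟩
    apply iSup_le; intro 𝔵'
    rw [Txi_modCostar_eq]
    refine le_trans (𝒯.tens_mono le_rfl (hpt 𝔵')) ?_
    refine le_trans ?_ (b.comp (𝒯.m 𝔜) t)
    exact le_iSup_of_le ⟨𝔜, rfl⟩ (le_iSup_of_le (𝒯.map f 𝔵') le_rfl)
  have u1 : ∀ φ : Hat a, 𝒯.unit ≤ b.rel (𝒯.e (SupY (fh φ))) (f (SupX φ)) := by
    intro φ
    rw [← 𝒯.e_nat SupY (fh φ),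
      adj_module hSY (yoneda_functor hhsb hyb) hadjY (𝒯.e (fh φ)) (f (SupX φ))]
    refine (unit_le_hatRel_iff hhsb _ _).2 fun 𝔶₀ => ?_
    rw [hyb (f (SupX φ)) 𝔶₀]
    refine hfhle φ 𝔶₀ (f (SupX φ)) fun 𝔵₀ => ?_
    exact le_trans (sup_unit hhsa hya hSX hSyX φ 𝔵₀) (hf 𝔵₀ (SupX φ))
  have u2 : ∀ φ : Hat a, 𝒯.unit ≤ b.rel (𝒯.e (f (SupX φ))) (SupY (fh φ)) := by
    intro φ
    rw [← 𝒯.e_nat f (SupX φ),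
      adj_module hf hr hadjf (𝒯.e (SupX φ)) (SupY (fh φ)),
      ← 𝒯.e_nat SupX φ,
      adj_module hSX (yoneda_functor hhsa hya) hadjX (𝒯.e φ) (r (SupY (fh φ)))]
    refine (unit_le_hatRel_iff hhsa _ _).2 fun 𝔵₀ => ?_
    rw [hya (r (SupY (fh φ))) 𝔵₀, ← adj_module hf hr hadjf 𝔵₀ (SupY (fh φ))]
    refine le_trans (le_hatMapRel_map b f φ.1 𝔵₀) ?_
    rw [← hfh φ (𝒯.map f 𝔵₀)]
    exact sup_unit hhsb hyb hSY hSyY (fh φ) (𝒯.map f 𝔵₀)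
  apply sepb (Hat a) hsa (f ∘ SupX) (SupY ∘ fh)
    (IsTFunctor.comp hSX hf)
    (IsTFunctor.comp (hatMap_functor hhsa hhsb hfh) hSY)
  intro 𝔶 φ
  exact le_antisymm (whisker b (u2 φ) 𝔶) (whisker b (u1 φ) 𝔶)

/-- converse direction: commutation with `Sup`s makes `f` a left adjoint. -/
lemma sup_comm_leftAdjoint {a : 𝒯.TCatStr X} {b : 𝒯.TCatStr Y}
    {hsa : 𝒯.TCatStr (Hat a)} {hsb : 𝒯.TCatStr (Hat b)}
    {ya : X → Hat a} {yb : Y → Hat b} {SupX : Hat a → X} {SupY : Hat b → Y}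
    {f : X → Y} {fh : Hat a → Hat b}
    (hhsa : IsHatStr a hsa) (hhsb : IsHatStr b hsb)
    (hya : IsYoneda a ya) (hyb : IsYoneda b yb)
    (hSX : IsTFunctor hsa a SupX) (hadjX : IsAdjunction hsa a SupX ya)
    (hSyX : ∀ x, SupX (ya x) = x)
    (hSY : IsTFunctor hsb b SupY) (hadjY : IsAdjunction hsb b SupY yb)
    (hSyY : ∀ y', SupY (yb y') = y')
    (hf : IsTFunctor a b f) (hfh : IsHatMap a b f fh)
    (hcomm : f ∘ SupX = SupY ∘ fh) : IsLeftAdjoint a b f := by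
  set gXY := invMap a b f hf with hgXY
  refine ⟨hf, fun y' => SupX (gXY (yb y')), ?_, ?_, ?_⟩
  · exact IsTFunctor.comp (IsTFunctor.comp (yoneda_functor hhsb hyb)
      (invMap_functor hhsa hhsb hf)) hSX
  · intro 𝔵 x
    refine whisker a ?_ 𝔵
    have hpt : ∀ 𝔵₀, (ya x).1 𝔵₀ ≤ (gXY (yb (f x))).1 𝔵₀ := by
      intro 𝔵₀
      rw [hya x 𝔵₀]
      show a.rel 𝔵₀ x ≤ (yb (f x)).1 (𝒯.map f 𝔵₀)
      rw [hyb (f x) (𝒯.map f 𝔵₀)]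
      exact hf 𝔵₀ x
    have := sup_mono hhsa hya hSX hadjX hSyX (ya x) (gXY (yb (f x))) hpt
    rwa [hSyX x] at this
  · intro 𝔶 y'
    refine whisker b ?_ 𝔶
    have hfr : f (SupX (gXY (yb y'))) = SupY (fh (gXY (yb y'))) := congrFun hcomm _
    have hpt : ∀ 𝔶₀, (fh (gXY (yb y'))).1 𝔶₀ ≤ (yb y').1 𝔶₀ := by
      intro 𝔶₀
      rw [hfh _ 𝔶₀]
      exact hatMapRel_counit b f (yb y') 𝔶₀
    have := sup_mono hhsb hyb hSY hadjY hSyY (fh (gXY (yb y'))) (yb y') hpt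
    rw [hSyY y'] at this
    show 𝒯.unit ≤ b.rel (𝒯.e (f (SupX (gXY (yb y'))))) y'
    rwa [hfr]

end Part6

section Products

variable {𝒯 : TopTheory V T} {J : Type u} {F : J → Type u}

/-- The product `𝒯`-category structure. -/
def prodStr (𝒯 : TopTheory V T) {J : Type u} (F : J → Type u)
    (S : ∀ j, 𝒯.TCatStr (F j)) : 𝒯.TCatStr (∀ j, F j) where
  rel 𝔵 x := ⨅ j, (S j).rel (𝒯.map (fun p => p j) 𝔵) (x j)
  le_refl x := le_iInf fun j => by
    rw [𝒯.e_nat]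
    exact (S j).le_refl (x j)
  comp 𝔵 x := by
    apply iSup_le; rintro ⟨𝔛, rfl⟩
    apply iSup_le; intro 𝔶
    apply le_iInf; intro j
    have h1 : 𝒯.Txi (fun 𝔵₀ x₀ => ⨅ k, (S k).rel (𝒯.map (fun p => p k) 𝔵₀) (x₀ k)) 𝔛 𝔶
        ≤ 𝒯.Txi (S j).rel (𝒯.map (𝒯.map (fun p => p j)) 𝔛) (𝒯.map (fun p => p j) 𝔶) :=
      le_trans (𝒯.Txi_mono' (fun 𝔵₀ x₀ => iInf_le _ j) 𝔛 𝔶)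
        (𝒯.Txi_comp_le (S j).rel (𝒯.map (fun p => p j)) (fun p => p j) 𝔛 𝔶)
    refine le_trans (𝒯.tens_mono h1 (iInf_le _ j)) ?_
    refine le_trans ?_ ((S j).comp (𝒯.map (fun p => p j) (𝒯.m 𝔛)) (x j))
    exact le_iSup_of_le ⟨𝒯.map (𝒯.map (fun p => p j)) 𝔛, by rw [← 𝒯.m_nat]⟩
      (le_iSup_of_le (𝒯.map (fun p => p j) 𝔶) le_rfl)

lemma proj_functor (S : ∀ j, 𝒯.TCatStr (F j)) (j : J) :
    IsTFunctor (prodStr 𝒯 F S) (S j) (fun p => p j) :=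
  fun 𝔵 x => iInf_le _ j

lemma prod_separated (S : ∀ j, 𝒯.TCatStr (F j)) (hsep : ∀ j, Separated (S j)) :
    Separated (prodStr 𝒯 F S) := by
  intro A as p q hp hq hpq
  have key : ∀ j, (fun v => p v j) = fun v => q v j := by
    intro j
    apply hsep j A as _ _ (IsTFunctor.comp hp (proj_functor S j))
      (IsTFunctor.comp hq (proj_functor S j))
    intro 𝔶 v
    have h1 : 𝒯.unit ≤ (S j).rel (𝒯.e (p v j)) (q v j) := by
      have := (hpq (𝒯.e (p v)) v) ▸ (prodStr 𝒯 F S).le_refl (p v)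
      have h2 := le_trans this (iInf_le _ j)
      rwa [𝒯.e_nat] at h2
    have h2 : 𝒯.unit ≤ (S j).rel (𝒯.e (q v j)) (p v j) := by
      have := (hpq (𝒯.e (q v)) v).symm ▸ (prodStr 𝒯 F S).le_refl (q v)
      have h2 := le_trans this (iInf_le _ j)
      rwa [𝒯.e_nat] at h2
    exact le_antisymm (whisker (S j) h1 𝔶) (whisker (S j) h2 𝔶)
  funext v
  funext j
  exact congrFun (key j) v

lemma prod_cocomplete (S : ∀ j, 𝒯.TCatStr (F j)) (hcoc : ∀ j, Cocomplete (S j)) :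
    Cocomplete (prodStr 𝒯 F S) := by
  intro A Z as cs h hfunc ψ hmod
  have hj : ∀ j, ∃ g : Z → F j, IsTFunctor cs (S j) g ∧
      IsColimit (S j) (fun v => h v j) ψ g := by
    intro j
    exact hcoc j A Z as cs (fun v => h v j)
      (IsTFunctor.comp hfunc (proj_functor S j)) ψ hmod
  choose gj hgj hcolj using hj
  refine ⟨fun z j => gj j z, ?_, ?_⟩
  · intro 𝔷 z
    apply le_iInf; intro j
    have := hgj j 𝔷 z
    rwa [show 𝒯.map (gj j) 𝔷
      = 𝒯.map (fun p => p j) (𝒯.map (fun z j => gj j z) 𝔷) by rw [map_map]] at this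
  · intro 𝔷 x
    have hms : ∀ 𝔞 : T A, modStar (prodStr 𝒯 F S) h 𝔞 x
        = ⨅ j, modStar (S j) (fun v => h v j) 𝔞 (x j) := by
      intro 𝔞
      refine iInf_congr fun j => ?_
      show (S j).rel (𝒯.map (fun p => p j) (𝒯.map h 𝔞)) (x j) = _
      rw [map_map]
      rfl
    calc modStar (prodStr 𝒯 F S) (fun z j => gj j z) 𝔷 x
        = ⨅ j, (S j).rel (𝒯.map (gj j) 𝔷) (x j) := by
          refine iInf_congr fun j => ?_
          rw [show 𝒯.map (gj j) 𝔷
            = 𝒯.map (fun p => p j) (𝒯.map (fun z j => gj j z) 𝔷) by rw [map_map]]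
      _ = ⨅ j, 𝒯.extend (modStar (S j) (fun v => h v j)) ψ 𝔷 (x j) :=
          iInf_congr fun j => hcolj j 𝔷 (x j)
      _ = ⨅ j, ⨅ 𝔞 : T A, 𝒯.ihom (⨆ 𝔄 : {𝔄 : T (T A) // 𝒯.m 𝔄 = 𝔞}, 𝒯.Txi ψ 𝔄.1 𝔷)
            (modStar (S j) (fun v => h v j) 𝔞 (x j)) := rfl
      _ = ⨅ 𝔞 : T A, ⨅ j, 𝒯.ihom (⨆ 𝔄 : {𝔄 : T (T A) // 𝒯.m 𝔄 = 𝔞}, 𝒯.Txi ψ 𝔄.1 𝔷)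
            (modStar (S j) (fun v => h v j) 𝔞 (x j)) := iInf_comm
      _ = 𝒯.extend (modStar (prodStr 𝒯 F S) h) ψ 𝔷 x := by
          refine iInf_congr fun 𝔞 => ?_
          rw [hms 𝔞, 𝒯.ihom_iInf]

end Products

section AdjHelpers

variable {𝒯 : TopTheory V T}

lemma rel_comp_point {X' : Type u} (c : 𝒯.TCatStr X') (𝔅 : T (T X')) (𝔶₂ : T X') (x : X') :
    𝒯.tens (𝒯.Txi c.rel 𝔅 𝔶₂) (c.rel 𝔶₂ x) ≤ c.rel (𝒯.m 𝔅) x := by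
  refine le_trans ?_ (c.comp (𝒯.m 𝔅) x)
  exact le_iSup_of_le ⟨𝔅, rfl⟩ (le_iSup_of_le 𝔶₂ le_rfl)

lemma Txi_rel_e_le {X' : Type u} (c : 𝒯.TCatStr X') (𝔅 : T (T X')) (x : X') :
    𝒯.Txi c.rel 𝔅 (𝒯.e x) ≤ c.rel (𝒯.m 𝔅) x :=
  calc 𝒯.Txi c.rel 𝔅 (𝒯.e x) = 𝒯.tens (𝒯.Txi c.rel 𝔅 (𝒯.e x)) 𝒯.unit := (𝒯.tens_unit _).symm
    _ ≤ 𝒯.tens (𝒯.Txi c.rel 𝔅 (𝒯.e x)) (c.rel (𝒯.e x) x) := 𝒯.tens_mono le_rfl (c.le_refl x)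
    _ ≤ c.rel (𝒯.m 𝔅) x := rel_comp_point c 𝔅 (𝒯.e x) x

lemma Txi_pullrel_eq {W X' : Type u} (c : 𝒯.TCatStr X') (k : W → X')
    (𝔚 : T (T W)) (𝔶₂ : T X') :
    𝒯.Txi (fun (𝔴₀ : T W) (x₀ : X') => c.rel (𝒯.map k 𝔴₀) x₀) 𝔚 𝔶₂
      = 𝒯.Txi c.rel (𝒯.map (𝒯.map k) 𝔚) 𝔶₂ :=
  (𝒯.Txi_map_left c.rel (𝒯.map k) 𝔚 𝔶₂).symm

/-- The "restriction of `c` along a functor `k`" module: `c(T k -, -)` as a module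
`(W, aw) ⇸∘ (X', c)`. -/
lemma pull_isModule {W X' : Type u} {aw : 𝒯.TCatStr W} {c : 𝒯.TCatStr X'} {k : W → X'}
    (hk : IsTFunctor aw c k) :
    𝒯.IsTModRel aw.rel c.rel (fun (𝔴₀ : T W) (x₀ : X') => c.rel (𝒯.map k 𝔴₀) x₀) := by
  constructor
  · intro 𝔴₁ x
    apply iSup_le; rintro ⟨𝔚, rfl⟩
    apply iSup_le; intro 𝔴₂
    have h1 : 𝒯.Txi aw.rel 𝔚 𝔴₂ ≤ 𝒯.Txi c.rel (𝒯.map (𝒯.map k) 𝔚) (𝒯.map k 𝔴₂) :=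
      le_trans (𝒯.Txi_mono' (fun 𝔴₀ w₀ => hk 𝔴₀ w₀) 𝔚 𝔴₂)
        (𝒯.Txi_comp_le c.rel (𝒯.map k) k 𝔚 𝔴₂)
    refine le_trans (𝒯.tens_mono h1 le_rfl) ?_
    refine le_trans (rel_comp_point c (𝒯.map (𝒯.map k) 𝔚) (𝒯.map k 𝔴₂) x) (le_of_eq ?_)
    rw [← 𝒯.m_nat]
  · intro 𝔴₁ x
    apply iSup_le; rintro ⟨𝔚, rfl⟩
    apply iSup_le; intro 𝔶₂
    rw [Txi_pullrel_eq c k 𝔚 𝔶₂]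
    refine le_trans (rel_comp_point c (𝒯.map (𝒯.map k) 𝔚) 𝔶₂ x) (le_of_eq ?_)
    rw [← 𝒯.m_nat]

/-- The universal-property inequality for the colimit of `id` weighted by a pulled-back
module: `unit ≤ extend`. -/
lemma unit_le_extend_pull {W X' : Type u} (c : 𝒯.TCatStr X') (k k' : W → X') (x : X')
    (hkk : ∀ 𝔴 : T W, 𝒯.map k' 𝔴 = 𝒯.map k 𝔴) :
    𝒯.unit ≤ 𝒯.extend (modStar c k')
      (fun (𝔴₀ : T W) (x₀ : X') => c.rel (𝒯.map k 𝔴₀) x₀) (𝒯.e x) x := by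
  apply le_iInf; intro 𝔴
  rw [𝒯.unit_le_ihom_iff]
  apply iSup_le; rintro ⟨𝔚, rfl⟩
  rw [Txi_pullrel_eq c k 𝔚 (𝒯.e x)]
  refine le_trans (Txi_rel_e_le c (𝒯.map (𝒯.map k) 𝔚) x) (le_of_eq ?_)
  show c.rel (𝒯.m (𝒯.map (𝒯.map k) 𝔚)) x = c.rel (𝒯.map k' (𝒯.m 𝔚)) x
  rw [← 𝒯.m_nat, hkk]

end AdjHelpers

section ProjAdjoint

variable {𝒯 : TopTheory V T} {J : Type u} {F : J → Type u}

set_option maxHeartbeats 1000000 in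
lemma proj_leftAdjoint (S : ∀ j, 𝒯.TCatStr (F j)) (hcoc : ∀ j, Cocomplete (S j)) (j : J) :
    IsLeftAdjoint (prodStr 𝒯 F S) (S j) (fun p => p j) := by
  have hmod : 𝒯.IsTModRel (prodStr 𝒯 F S).rel (S j).rel
      (fun (𝔵 : T (∀ k, F k)) (y : F j) => (S j).rel (𝒯.map (fun p => p j) 𝔵) y) :=
    pull_isModule (proj_functor S j)
  have hj : ∀ k, ∃ g : F j → F k, IsTFunctor (S j) (S k) g ∧
      IsColimit (S k) (fun p : ∀ k, F k => p k)
        (fun (𝔵 : T (∀ k, F k)) (y : F j) => (S j).rel (𝒯.map (fun p => p j) 𝔵) y) g :=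
    fun k => hcoc k (∀ k, F k) (F j) (prodStr 𝒯 F S) (S j) (fun p => p k)
      (proj_functor S k) _ hmod
  choose gjk hgjk hcoljk using hj
  refine ⟨proj_functor S j, fun y k => gjk k y, ?_, ?_, ?_⟩
  · intro 𝔶 y
    apply le_iInf; intro k
    have := hgjk k 𝔶 y
    rwa [show 𝒯.map (gjk k) 𝔶
      = 𝒯.map (fun p => p k) (𝒯.map (fun y k => gjk k y) 𝔶) by rw [map_map]] at this
  · intro 𝔵 x
    refine whisker (prodStr 𝒯 F S) ?_ 𝔵
    apply le_iInf; intro k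
    have hcc := colimit_cocone (hcoljk k) (𝒯.e x) (x j)
    refine le_trans (le_trans ?_ hcc) (le_of_eq rfl)
    show 𝒯.unit ≤ (S j).rel (𝒯.map (fun p => p j) (𝒯.e x)) (x j)
    rw [𝒯.e_nat]
    exact (S j).le_refl (x j)
  · intro 𝔶 y
    refine whisker (S j) ?_ 𝔶
    have hform := hcoljk j (𝒯.e y) y
    rw [show modStar (S j) (gjk j) (𝒯.e y) y
      = (S j).rel (𝒯.map (gjk j) (𝒯.e y)) y from rfl, 𝒯.e_nat] at hform
    have h0 : 𝒯.unit ≤ 𝒯.extend (modStar (S j) (fun p : ∀ k, F k => p j))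
        (fun (𝔵 : T (∀ k, F k)) (y' : F j) => (S j).rel (𝒯.map (fun p => p j) 𝔵) y')
        (𝒯.e y) y :=
      unit_le_extend_pull (W := ∀ k, F k) (S j) (fun p => p j) (fun p => p j) y
        (fun _ => rfl)
    show 𝒯.unit ≤ (S j).rel (𝒯.e (gjk j y)) y
    rw [hform]
    exact h0

set_option maxHeartbeats 1000000 in
lemma pair_leftAdjoint {W : Type u} {aw : 𝒯.TCatStr W} (S : ∀ j, 𝒯.TCatStr (F j))
    (cocW : Cocomplete aw) (p : ∀ j, W → F j) (hp : ∀ j, IsLeftAdjoint aw (S j) (p j)) :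
    IsLeftAdjoint aw (prodStr 𝒯 F S) (fun w j => p j w) := by
  have hmod : 𝒯.IsTModRel aw.rel (prodStr 𝒯 F S).rel
      (fun (𝔴 : T W) (x : ∀ k, F k) => ⨅ j, (S j).rel (𝒯.map (p j) 𝔴) (x j)) := by
    constructor
    · intro 𝔴₁ x
      apply iSup_le; rintro ⟨𝔚, rfl⟩
      apply iSup_le; intro 𝔴₂
      apply le_iInf; intro j
      have h1 : 𝒯.Txi aw.rel 𝔚 𝔴₂
          ≤ 𝒯.Txi (S j).rel (𝒯.map (𝒯.map (p j)) 𝔚) (𝒯.map (p j) 𝔴₂) :=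
        le_trans (𝒯.Txi_mono' (fun 𝔴₀ w₀ => (hp j).1 𝔴₀ w₀) 𝔚 𝔴₂)
          (𝒯.Txi_comp_le (S j).rel (𝒯.map (p j)) (p j) 𝔚 𝔴₂)
      refine le_trans (𝒯.tens_mono h1 (iInf_le _ j)) ?_
      refine le_trans (rel_comp_point (S j) _ _ (x j)) (le_of_eq ?_)
      rw [← 𝒯.m_nat]
    · intro 𝔴₁ x
      apply iSup_le; rintro ⟨𝔚, rfl⟩
      apply iSup_le; intro 𝔵₂
      apply le_iInf; intro j
      have h1 : 𝒯.Txi (fun (𝔴₀ : T W) (x₀ : ∀ k, F k) =>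
          ⨅ j, (S j).rel (𝒯.map (p j) 𝔴₀) (x₀ j)) 𝔚 𝔵₂
          ≤ 𝒯.Txi (S j).rel (𝒯.map (𝒯.map (p j)) 𝔚) (𝒯.map (fun q => q j) 𝔵₂) :=
        le_trans (𝒯.Txi_mono' (fun 𝔴₀ x₀ => iInf_le _ j) 𝔚 𝔵₂)
          (𝒯.Txi_comp_le (S j).rel (𝒯.map (p j)) (fun q => q j) 𝔚 𝔵₂)
      refine le_trans (𝒯.tens_mono h1 (iInf_le _ j)) ?_
      refine le_trans (rel_comp_point (S j) _ _ (x j)) (le_of_eq ?_)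
      rw [← 𝒯.m_nat]
  obtain ⟨v, hvf, hvcol⟩ := cocW W (∀ k, F k) aw (prodStr 𝒯 F S) id
    (isTFunctor_id aw) _ hmod
  refine ⟨?_, v, hvf, ?_, ?_⟩
  · intro 𝔴 w
    apply le_iInf; intro j
    have := (hp j).1 𝔴 w
    rwa [show 𝒯.map (p j) 𝔴
      = 𝒯.map (fun q => q j) (𝒯.map (fun w j => p j w) 𝔴) by rw [map_map]] at this
  · intro 𝔴 w
    refine whisker aw ?_ 𝔴
    have hcc := colimit_cocone hvcol (𝒯.e w) (fun j => p j w)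
    rw [show 𝒯.map id (𝒯.e w) = 𝒯.e w from congrFun 𝒯.map_id _] at hcc
    refine le_trans ?_ hcc
    apply le_iInf; intro j
    rw [𝒯.e_nat]
    exact (S j).le_refl (p j w)
  · intro 𝔵 x
    refine whisker (prodStr 𝒯 F S) ?_ 𝔵
    apply le_iInf; intro j
    rw [𝒯.e_nat]
    obtain ⟨hpjf, rj, hrj, hadjj⟩ := hp j
    have hc := leftAdjoint_cocont hpjf hrj hadjj hvcol
    have hform := hc (𝒯.e x) (x j)
    rw [show modStar (S j) (p j ∘ v) (𝒯.e x) (x j)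
      = (S j).rel (𝒯.map (p j ∘ v) (𝒯.e x)) (x j) from rfl, 𝒯.e_nat] at hform
    show 𝒯.unit ≤ (S j).rel (𝒯.e ((p j ∘ v) x)) (x j)
    rw [hform]
    apply le_iInf; intro 𝔴
    rw [𝒯.unit_le_ihom_iff]
    apply iSup_le; rintro ⟨𝔚, rfl⟩
    have h1 : 𝒯.Txi (fun (𝔴₀ : T W) (x₀ : ∀ k, F k) =>
        ⨅ j, (S j).rel (𝒯.map (p j) 𝔴₀) (x₀ j)) 𝔚 (𝒯.e x)
        ≤ 𝒯.Txi (S j).rel (𝒯.map (𝒯.map (p j)) 𝔚) (𝒯.e (x j)) := by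
      refine le_trans (𝒯.Txi_mono' (fun 𝔴₀ x₀ => iInf_le _ j) 𝔚 (𝒯.e x)) ?_
      refine le_trans (𝒯.Txi_comp_le (S j).rel (𝒯.map (p j)) (fun q => q j) 𝔚 (𝒯.e x))
        (le_of_eq ?_)
      rw [𝒯.e_nat]
    refine le_trans h1 ?_
    refine le_trans (Txi_rel_e_le (S j) (𝒯.map (𝒯.map (p j)) 𝔚) (x j)) (le_of_eq ?_)
    show (S j).rel (𝒯.m (𝒯.map (𝒯.map (p j)) 𝔚)) (x j)
      = (S j).rel (𝒯.map (p j ∘ id) (𝒯.m 𝔚)) (x j)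
    rw [← 𝒯.m_nat]
    rfl

end ProjAdjoint

section Equalizers

variable {𝒯 : TopTheory V T} {X Y : Type u}

lemma sub_val_functor (a : 𝒯.TCatStr X) (P : X → Prop) :
    IsTFunctor (pullbackStr a (Subtype.val : {x // P x} → X)) a Subtype.val :=
  fun _ _ => le_rfl

/-- strong colimit construction in an "equalizer" sub-`𝒯`-category. -/
lemma eq_strong_colim {a : 𝒯.TCatStr X} {b : 𝒯.TCatStr Y} {f₁ f₂ : X → Y}
    (sepb : Separated b) (coca : Cocomplete a)
    (hl1 : IsLeftAdjoint a b f₁) (hl2 : IsLeftAdjoint a b f₂)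
    {A Z : Type u} {as : 𝒯.TCatStr A} {cs : 𝒯.TCatStr Z}
    (h : A → {x // f₁ x = f₂ x})
    (hfunc : IsTFunctor as (pullbackStr a (Subtype.val : {x // f₁ x = f₂ x} → X)) h)
    (ψ : T A → Z → V) (hmod : 𝒯.IsTModRel as.rel cs.rel ψ) :
    ∃ g : Z → {x // f₁ x = f₂ x},
      IsTFunctor cs (pullbackStr a (Subtype.val : {x // f₁ x = f₂ x} → X)) g ∧
      IsColimit (pullbackStr a (Subtype.val : {x // f₁ x = f₂ x} → X)) h ψ g ∧
      ∀ (𝔷 : T Z) (x' : X), a.rel (𝒯.map (fun z => (g z).1) 𝔷) x'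
        = 𝒯.extend (modStar a (fun v => (h v).1)) ψ 𝔷 x' := by
  have hvh : IsTFunctor as a (fun v => (h v).1) := by
    intro 𝔵 v
    have h0 := hfunc 𝔵 v
    show as.rel 𝔵 v ≤ a.rel (𝒯.map (fun v => (h v).1) 𝔵) ((h v).1)
    rw [← map_map]
    exact h0
  obtain ⟨g₀, hg₀, hcol₀⟩ := coca A Z as cs (fun v => (h v).1) hvh ψ hmod
  obtain ⟨hf1, r1, hr1, hadj1⟩ := hl1
  obtain ⟨hf2, r2, hr2, hadj2⟩ := hl2
  have hc1 : IsColimit b (f₁ ∘ fun v => (h v).1) ψ (f₁ ∘ g₀) :=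
    leftAdjoint_cocont hf1 hr1 hadj1 hcol₀
  have hc2 : IsColimit b (f₂ ∘ fun v => (h v).1) ψ (f₂ ∘ g₀) :=
    leftAdjoint_cocont hf2 hr2 hadj2 hcol₀
  have hdiag : (f₁ ∘ fun v => (h v).1) = (f₂ ∘ fun v => (h v).1) :=
    funext fun v => (h v).2
  have hc2' : IsColimit b (f₁ ∘ fun v => (h v).1) ψ (f₂ ∘ g₀) := by
    rw [hdiag]; exact hc2
  have heq : f₁ ∘ g₀ = f₂ ∘ g₀ := colimit_unique sepb
    (IsTFunctor.comp hg₀ hf1) (IsTFunctor.comp hg₀ hf2) hc1 hc2'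
  refine ⟨fun z => ⟨g₀ z, congrFun heq z⟩, ?_, ?_, ?_⟩
  · intro 𝔷 z
    show cs.rel 𝔷 z ≤ a.rel (𝒯.map Subtype.val
      (𝒯.map (fun z => (⟨g₀ z, congrFun heq z⟩ : {x // f₁ x = f₂ x})) 𝔷)) (g₀ z)
    rw [map_map]
    exact hg₀ 𝔷 z
  · intro 𝔷 x
    calc (pullbackStr a Subtype.val).rel
          (𝒯.map (fun z => (⟨g₀ z, congrFun heq z⟩ : {x // f₁ x = f₂ x})) 𝔷) x
        = a.rel (𝒯.map g₀ 𝔷) x.1 := by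
          show a.rel (𝒯.map Subtype.val _) x.1 = _
          rw [map_map]
      _ = 𝒯.extend (modStar a (fun v => (h v).1)) ψ 𝔷 x.1 := hcol₀ 𝔷 x.1
      _ = 𝒯.extend (modStar (pullbackStr a Subtype.val) h) ψ 𝔷 x := by
          refine iInf_congr fun 𝔞 => ?_
          congr 1
          show a.rel (𝒯.map (fun v => (h v).1) 𝔞) x.1
            = a.rel (𝒯.map Subtype.val (𝒯.map h 𝔞)) x.1
          rw [map_map]
  · intro 𝔷 x'
    exact hcol₀ 𝔷 x'

lemma sub_separated (a : 𝒯.TCatStr X) (sep : Separated a) (P : X → Prop) :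
    Separated (pullbackStr a (Subtype.val : {x // P x} → X)) := by
  intro A as p q hp hq hpq
  have hp' : IsTFunctor as a (fun v => (p v).1) := by
    intro 𝔵 v
    show as.rel 𝔵 v ≤ a.rel (𝒯.map (fun v => (p v).1) 𝔵) ((p v).1)
    rw [← map_map]
    exact hp 𝔵 v
  have hq' : IsTFunctor as a (fun v => (q v).1) := by
    intro 𝔵 v
    show as.rel 𝔵 v ≤ a.rel (𝒯.map (fun v => (q v).1) 𝔵) ((q v).1)
    rw [← map_map]
    exact hq 𝔵 v
  have fe : ∀ (𝔵 : T X) (v : A), a.rel 𝔵 (p v).1 = a.rel 𝔵 (q v).1 := by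
    intro 𝔵 v
    have h1' : 𝒯.unit ≤ a.rel (𝒯.map Subtype.val (𝒯.e (p v))) (q v).1 :=
      le_trans ((pullbackStr a Subtype.val).le_refl (p v)) (le_of_eq (hpq (𝒯.e (p v)) v))
    have h2' : 𝒯.unit ≤ a.rel (𝒯.map Subtype.val (𝒯.e (q v))) (p v).1 :=
      le_trans ((pullbackStr a Subtype.val).le_refl (q v))
        (le_of_eq (hpq (𝒯.e (q v)) v).symm)
    rw [𝒯.e_nat] at h1' h2'
    exact le_antisymm (whisker a h1' 𝔵) (whisker a h2' 𝔵)
  have key := sep A as _ _ hp' hq' fe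
  funext v
  exact Subtype.ext (congrFun key v)

set_option maxHeartbeats 1000000 in
lemma sub_val_leftAdjoint {a : 𝒯.TCatStr X} {b : 𝒯.TCatStr Y} {f₁ f₂ : X → Y}
    (sepb : Separated b) (coca : Cocomplete a)
    (hl1 : IsLeftAdjoint a b f₁) (hl2 : IsLeftAdjoint a b f₂) :
    IsLeftAdjoint (pullbackStr a (Subtype.val : {x // f₁ x = f₂ x} → X)) a
      Subtype.val := by
  have hmod := pull_isModule (c := a) (sub_val_functor a (fun x => f₁ x = f₂ x))
  obtain ⟨ρ, hρf, hρcolE, hρcolX⟩ := eq_strong_colim sepb coca hl1 hl2 id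
    (isTFunctor_id _) _ hmod
  refine ⟨sub_val_functor a _, ρ, hρf, ?_, ?_⟩
  · intro 𝔢 w
    refine whisker (pullbackStr a Subtype.val) ?_ 𝔢
    have hcc := colimit_cocone hρcolE (𝒯.e w) w.1
    rw [show 𝒯.map id (𝒯.e w) = 𝒯.e w from congrFun 𝒯.map_id _] at hcc
    refine le_trans ?_ hcc
    show 𝒯.unit ≤ a.rel (𝒯.map Subtype.val (𝒯.e w)) w.1
    rw [𝒯.e_nat]
    exact a.le_refl w.1
  · intro 𝔵 x
    refine whisker a ?_ 𝔵
    have hform := hρcolX (𝒯.e x) x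
    rw [𝒯.e_nat] at hform
    show 𝒯.unit ≤ a.rel (𝒯.e ((ρ x).1)) x
    rw [hform]
    exact unit_le_extend_pull (W := {x // f₁ x = f₂ x}) a Subtype.val
      (fun v => (id v).1) x (fun _ => rfl)

lemma sub_corestrict {a : 𝒯.TCatStr X} {P : X → Prop} {W : Type u} {aw : 𝒯.TCatStr W}
    {k : W → X} (hk : IsLeftAdjoint aw a k) (hker : ∀ w, P (k w)) :
    IsLeftAdjoint aw (pullbackStr a (Subtype.val : {x // P x} → X))
      (fun w => ⟨k w, hker w⟩) := by
  obtain ⟨hkf, rk, hrk, hadjk⟩ := hk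
  refine ⟨?_, fun x' => rk x'.1, ?_, ?_, ?_⟩
  · intro 𝔴 w
    show aw.rel 𝔴 w ≤ a.rel (𝒯.map Subtype.val
      (𝒯.map (fun w => (⟨k w, hker w⟩ : {x // P x})) 𝔴)) (k w)
    rw [map_map]
    exact hkf 𝔴 w
  · intro 𝔢 x'
    have h0 := hrk (𝒯.map Subtype.val 𝔢) x'.1
    rwa [map_map] at h0
  · intro 𝔴 w
    exact hadjk.1 𝔴 w
  · intro 𝔢 x'
    exact hadjk.2 (𝒯.map Subtype.val 𝔢) x'.1

end Equalizers

section CategoryLimits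

open CategoryTheory CategoryTheory.Limits

variable {𝒯 : TopTheory V T}

/-- product object in `Cocompl_sep 𝒯`. -/
def prodObj {J : Type u} (F : J → CocomplSep 𝒯) : CocomplSep 𝒯 where
  carrier := ∀ j, (F j).carrier
  str := prodStr 𝒯 _ (fun j => (F j).str)
  sep := prod_separated _ (fun j => (F j).sep)
  coc := prod_cocomplete _ (fun j => (F j).coc)

/-- projections are left adjoints. -/
def prodProj {J : Type u} (F : J → CocomplSep 𝒯) (j : J) : prodObj F ⟶ F j :=
  ⟨fun p => p j, proj_leftAdjoint _ (fun k => (F k).coc) j⟩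

noncomputable instance : HasProducts.{u} (CocomplSep 𝒯) := fun J =>
  { has_limit := fun F => by
      have hbase : ∀ f : J → CocomplSep 𝒯, HasLimit (Discrete.functor f) := by
        intro f
        refine HasLimit.mk ⟨Fan.mk (prodObj f) (prodProj f), mkFanLimit _ ?_ ?_ ?_⟩
        · intro s
          exact ⟨fun w j => (s.proj j).1 w,
            pair_leftAdjoint _ s.pt.coc _ (fun j => (s.proj j).2)⟩
        · intro s j
          exact Subtype.ext rfl
        · intro s m hm
          apply Subtype.ext
          funext w
          funext j
          exact congrFun (congrArg Subtype.val (hm j)) w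
      have : HasLimit (Discrete.functor (F.obj ∘ Discrete.mk)) := hbase _
      exact hasLimit_of_iso Discrete.natIsoFunctor.symm }

/-- equalizer object in `Cocompl_sep 𝒯`. -/
def eqObj {A B : CocomplSep 𝒯} (f g : A ⟶ B) : CocomplSep 𝒯 where
  carrier := {x // f.1 x = g.1 x}
  str := pullbackStr A.str Subtype.val
  sep := sub_separated _ A.sep _
  coc := fun A' Z as cs h hf ψ hm => by
    obtain ⟨g', h1, h2, -⟩ := eq_strong_colim B.sep A.coc f.2 g.2 h hf ψ hm
    exact ⟨g', h1, h2⟩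

def eqι {A B : CocomplSep 𝒯} (f g : A ⟶ B) : eqObj f g ⟶ A :=
  ⟨Subtype.val, sub_val_leftAdjoint B.sep A.coc f.2 g.2⟩

noncomputable instance : HasEqualizers (CocomplSep 𝒯) :=
  { has_limit := fun F => by
      have hbase : ∀ (A B : CocomplSep 𝒯) (f g : A ⟶ B), HasLimit (parallelPair f g) := by
        intro A B f g
        refine HasLimit.mk ⟨Fork.ofι (eqι f g) (Subtype.ext (funext fun e => e.2)),
          Fork.IsLimit.mk _ ?_ ?_ ?_⟩
        · intro s
          exact ⟨fun w => ⟨s.ι.1 w, congrFun (congrArg Subtype.val s.condition) w⟩,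
            sub_corestrict s.ι.2 _⟩
        · intro s
          exact Subtype.ext rfl
        · intro s m hm
          apply Subtype.ext
          funext w
          exact Subtype.ext (congrFun (congrArg Subtype.val hm) w)
      have : HasLimit (parallelPair (F.map WalkingParallelPairHom.left)
        (F.map WalkingParallelPairHom.right)) := hbase _ _ _ _
      exact hasLimit_of_iso (diagramIsoParallelPair F).symm }

noncomputable def cocomplSep_hasLimits : HasLimitsOfSize.{u, u} (CocomplSep 𝒯) :=
  has_limits_of_hasEqualizers_and_products

end CategoryLimits

/-- Subsection "Cocomplete 𝒯-categories as Eilenberg–Moore algebras".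
On `Cat_sep 𝒯`, the presheaf construction `X ↦ X̂` with the Yoneda functors as unit
and `μ_X = y_X⁻¹` as multiplication defines a 2-monad `𝕀` of Kock–Zöberlein type
(`ŷ_X ≤ y_{X̂}`); its Eilenberg–Moore algebras correspond exactly to the L-separated
cocomplete `𝒯`-categories (structure maps `Sup_X ⊣ y_X` with `Sup_X · y_X = 1`), with
homomorphisms the left adjoint `𝒯`-functors, so the Eilenberg–Moore category is
equivalent to `Cocompl_sep 𝒯`. In particular, `Cocompl_sep 𝒯` is complete. -/
theorem statement6 (𝒯 : TopTheory V T) :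
    -- the presheaf construction takes values in separated 𝒯-categories
    (∀ (X : Type u) (a : 𝒯.TCatStr X) (hs : 𝒯.TCatStr (Hat a)),
       Separated a → IsHatStr a hs → Separated hs) ∧
    -- unit (Yoneda) is natural and `(·)̂` is a 2-functor on left adjoints
    (∀ (X Y : Type u) (a : 𝒯.TCatStr X) (b : 𝒯.TCatStr Y)
       (hsa : 𝒯.TCatStr (Hat a)) (hsb : 𝒯.TCatStr (Hat b))
       (ya : X → Hat a) (yb : Y → Hat b) (f g : X → Y) (fh gh : Hat a → Hat b),
       Separated a → Separated b → IsHatStr a hsa → IsHatStr b hsb →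
       IsYoneda a ya → IsYoneda b yb → IsTFunctor a hsa ya → IsTFunctor b hsb yb →
       IsTFunctor a b f → IsTFunctor a b g → IsHatMap a b f fh → IsHatMap a b g gh →
       (IsLeftAdjoint hsa hsb fh ∧ fh ∘ ya = yb ∘ f ∧
         (funLE b f g → funLE hsb fh gh))) ∧
    -- Kock–Zöberlein property: `ŷ_X ≤ y_{X̂}`
    (∀ (X : Type u) (a : 𝒯.TCatStr X) (hs : 𝒯.TCatStr (Hat a))
       (hs2 : 𝒯.TCatStr (Hat hs)) (y : X → Hat a) (y' : Hat a → Hat hs)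
       (yh : Hat a → Hat hs),
       Separated a → IsHatStr a hs → IsHatStr hs hs2 →
       IsYoneda a y → IsTFunctor a hs y → IsYoneda hs y' → IsTFunctor hs hs2 y' →
       IsHatMap a hs y yh → funLE hs2 yh y') ∧
    -- the monad unit laws for `μ_X = y_X⁻¹`
    (∀ (X : Type u) (a : 𝒯.TCatStr X) (hs : 𝒯.TCatStr (Hat a))
       (hs2 : 𝒯.TCatStr (Hat hs)) (y : X → Hat a) (y' : Hat a → Hat hs)
       (yh : Hat a → Hat hs) (μ : Hat hs → Hat a),
       Separated a → IsHatStr a hs → IsHatStr hs hs2 →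
       IsYoneda a y → IsTFunctor a hs y → IsYoneda hs y' → IsTFunctor hs hs2 y' →
       IsHatMap a hs y yh →
       (∀ (Ψ : Hat hs) (𝔵 : T X), (μ Ψ).1 𝔵 = Ψ.1 (𝒯.map y 𝔵)) →
       (∀ Ψ : Hat a, μ (y' Ψ) = Ψ) ∧ (∀ ψ : Hat a, μ (yh ψ) = ψ)) ∧
    -- Eilenberg–Moore algebra structures (`Sup ⊣ y`, `Sup · y = 1`) exist exactly on
    -- the cocomplete separated 𝒯-categories
    (∀ (X : Type u) (a : 𝒯.TCatStr X) (hs : 𝒯.TCatStr (Hat a)) (y : X → Hat a),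
       Separated a → IsHatStr a hs → IsYoneda a y → IsTFunctor a hs y →
       ((∃ h : Hat a → X, IsTFunctor hs a h ∧ h ∘ y = id ∧ IsAdjunction hs a h y) ↔
         Cocomplete a)) ∧
    -- homomorphisms of algebras are exactly the left adjoint 𝒯-functors
    (∀ (X Y : Type u) (a : 𝒯.TCatStr X) (b : 𝒯.TCatStr Y)
       (hsa : 𝒯.TCatStr (Hat a)) (hsb : 𝒯.TCatStr (Hat b))
       (ya : X → Hat a) (yb : Y → Hat b)
       (SupX : Hat a → X) (SupY : Hat b → Y) (f : X → Y) (fh : Hat a → Hat b),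
       Separated a → Separated b → Cocomplete a → Cocomplete b →
       IsHatStr a hsa → IsHatStr b hsb → IsYoneda a ya → IsYoneda b yb →
       IsTFunctor a hsa ya → IsTFunctor b hsb yb →
       IsTFunctor hsa a SupX → IsAdjunction hsa a SupX ya → SupX ∘ ya = id →
       IsTFunctor hsb b SupY → IsAdjunction hsb b SupY yb → SupY ∘ yb = id →
       IsTFunctor a b f → IsHatMap a b f fh →
       (IsLeftAdjoint a b f ↔ f ∘ SupX = SupY ∘ fh)) ∧
    -- in particular, `Cocompl_sep 𝒯` is complete
    CategoryTheory.Limits.HasLimitsOfSize.{u, u} (CocomplSep 𝒯) := by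
  refine ⟨?_, ?_, ?_, ?_, ?_, ?_, ?_⟩
  · -- presheaf categories are separated
    intro X a hs _ hhs
    exact hat_separated hhs
  · -- 2-functoriality and naturality of Yoneda
    intro X Y a b hsa hsb ya yb f g fh gh _ _ hhsa hhsb hya hyb _ _ hf _ hfh hgh
    exact ⟨hatMap_leftAdjoint hhsa hhsb hf hfh, hatMap_yoneda_comm hya hyb hf hfh,
      fun hle => hatMap_le hhsb hfh hgh hle⟩
  · -- Kock–Zöberlein property
    intro X a hs hs2 y y' yh _ hhs hhs2 hy _ hy' _ hyh
    exact kz_funLE hhs hhs2 hy hy' hyh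
  · -- unit laws for `μ`
    intro X a hs hs2 y y' yh μ _ hhs _ hy _ hy' _ hyh hμ
    constructor
    · intro Ψ
      apply Subtype.ext
      funext 𝔵
      rw [hμ (y' Ψ) 𝔵, hy' Ψ (𝒯.map y 𝔵), yoneda_eval hhs hy]
    · intro ψ
      apply Subtype.ext
      funext 𝔵
      rw [hμ (yh ψ) 𝔵, hyh ψ (𝒯.map y 𝔵)]
      exact hatMapRel_yon_map a hhs hy ψ 𝔵
  · -- Eilenberg–Moore structures = cocompleteness
    intro X a hs y sep hhs hy _
    constructor
    · rintro ⟨h, hfun, hhy, hadj⟩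
      exact sup_to_cocomplete hhs hy hfun hadj (fun x => congrFun hhy x)
    · intro coc
      exact cocomplete_sup hhs hy sep coc
  · -- homomorphisms = left adjoints
    intro X Y a b hsa hsb ya yb SupX SupY f fh _ sepb _ _ hhsa hhsb hya hyb _ _
      hSX hadjX hSyX hSY hadjY hSyY hf hfh
    constructor
    · intro hla
      exact leftAdjoint_sup_comm sepb hhsa hhsb hya hyb hSX hadjX
        (fun x => congrFun hSyX x) hSY hadjY (fun y' => congrFun hSyY y') hf hfh hla
    · intro hcomm
      exact sup_comm_leftAdjoint hhsa hhsb hya hyb hSX hadjX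
        (fun x => congrFun hSyX x) hSY hadjY (fun y' => congrFun hSyY y') hf hfh hcomm
  · -- completeness of `Cocompl_sep 𝒯`
    exact cocomplSep_hasLimits

end TopTheory

end Paper
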